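/- arXiv:1009.1637 — 8 statements merged into one kernel-verified Lean document; each statement's English description precedes it below -/
import Mathlib

section
/- Let ζ lie on the unit circle with Σ_{j=0}^∞ |φ_j(ζ)|² = ∞ (ζ is not a pure point of the measure), and suppose ζⁿ·α_n → L for some L ∈ ℂ. Then ζⁿ·Δ_n(ζ) → −2L, and consequently ζⁿ·(α_n + Δ_n(ζ)) → −L; that is, the rotated perturbed Verblunsky coefficients converge to the negative of the limit of the rotated original ones. -/
open Filter Finset

set_option maxHeartbeats 1600000

namespace OPUCAux

/-- Forward contraction with vanishing perturbation. -/
lemma lemC {e δ : ℕ → ℝ} {q : ℝ} (hq0 : 0 ≤ q) (hq1 : q < 1) {N : ℕ}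
    (he : ∀ n, N ≤ n → 0 ≤ e n)
    (hrec : ∀ n, N ≤ n → e (n + 1) ≤ q * e n + δ n)
    (hδ : Tendsto δ atTop (nhds 0)) : Tendsto e atTop (nhds 0) := by
  rw [Metric.tendsto_atTop]
  intro ε hε
  have h1q : (0:ℝ) < 1 - q := by linarith
  have h2 : 0 < ε * (1 - q) / 2 := by positivity
  obtain ⟨M0, hM0⟩ := (Metric.tendsto_atTop.1 hδ) (ε * (1 - q) / 2) h2
  set M := max M0 N with hM
  have hMN : N ≤ M := le_max_right _ _
  have hδ' : ∀ n, M ≤ n → δ n ≤ ε * (1 - q) / 2 := by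
    intro n hn
    have := hM0 n (le_trans (le_max_left _ _) hn)
    rw [Real.dist_eq, sub_zero] at this
    exact le_of_lt (lt_of_abs_lt this)
  have key : ∀ k, e (M + k) ≤ q ^ k * e M + ε / 2 := by
    intro k
    induction k with
    | zero => simp; nlinarith [he M hMN]
    | succ k ih =>
        have h1 : e (M + k + 1) ≤ q * e (M + k) + δ (M + k) :=
          hrec (M + k) (le_trans hMN (Nat.le_add_right _ _))
        have h3 : δ (M + k) ≤ ε * (1 - q) / 2 := hδ' _ (Nat.le_add_right _ _)
        have : e (M + (k + 1)) = e (M + k + 1) := by ring_nf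
        rw [this]
        calc e (M + k + 1) ≤ q * (q ^ k * e M + ε / 2) + ε * (1 - q) / 2 := by nlinarith
        _ = q ^ (k + 1) * e M + ε / 2 := by ring
  obtain ⟨k0, hk0⟩ := (Metric.tendsto_atTop.1
    (tendsto_pow_atTop_nhds_zero_of_lt_one hq0 hq1)) (ε / (2 * (e M + 1))) (by
      have := he M hMN; positivity)
  use M + k0
  intro n hn
  rw [Real.dist_eq, sub_zero]
  have heM : 0 ≤ e M := he M hMN
  have h4 : e n ≤ q ^ (n - M) * e M + ε / 2 := by
    have := key (n - M)
    rwa [Nat.add_sub_cancel' (le_trans (Nat.le_add_right _ _) hn)] at this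
  have h5 : q ^ (n - M) ≤ q ^ k0 := by
    apply pow_le_pow_of_le_one hq0 (le_of_lt hq1)
    omega
  have h6 : q ^ k0 < ε / (2 * (e M + 1)) := by
    have := hk0 k0 le_rfl
    rw [Real.dist_eq, sub_zero] at this
    calc q ^ k0 ≤ |q ^ k0| := le_abs_self _
    _ < _ := this
  have h7 : q ^ (n - M) * e M < ε / 2 := by
    have hq' : 0 ≤ q ^ (n - M) := pow_nonneg hq0 _
    have : q ^ (n - M) * e M ≤ q ^ k0 * e M := by nlinarith
    have h8 : q ^ k0 * e M ≤ q ^ k0 * (e M + 1) := by nlinarith [pow_nonneg hq0 k0]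
    have h9 : q ^ k0 * (e M + 1) < ε / (2 * (e M + 1)) * (e M + 1) := by nlinarith
    have h10 : ε / (2 * (e M + 1)) * (e M + 1) = ε / 2 := by field_simp
    linarith
  have : 0 ≤ e n := he n (le_trans (le_trans hMN (Nat.le_add_right _ _)) hn)
  rw [abs_of_nonneg this]
  linarith

/-- Backward contraction with bound and vanishing perturbation. -/
lemma lemC' {e δ : ℕ → ℝ} {q B : ℝ} (hq0 : 0 ≤ q) (hq1 : q < 1) (hB : 0 ≤ B) {N : ℕ}
    (he : ∀ n, N ≤ n → 0 ≤ e n ∧ e n ≤ B)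
    (hrec : ∀ n, N ≤ n → e n ≤ q * e (n + 1) + δ n)
    (hδ : Tendsto δ atTop (nhds 0)) : Tendsto e atTop (nhds 0) := by
  rw [Metric.tendsto_atTop]
  intro ε hε
  have h1q : (0:ℝ) < 1 - q := by linarith
  have h2 : 0 < ε * (1 - q) / 2 := by positivity
  obtain ⟨M0, hM0⟩ := (Metric.tendsto_atTop.1 hδ) (ε * (1 - q) / 2) h2
  set M := max M0 N with hM
  have hMN : N ≤ M := le_max_right _ _
  have hδ' : ∀ n, M ≤ n → δ n ≤ ε * (1 - q) / 2 := by
    intro n hn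
    have := hM0 n (le_trans (le_max_left _ _) hn)
    rw [Real.dist_eq, sub_zero] at this
    exact le_of_lt (lt_of_abs_lt this)
  have key : ∀ k, ∀ n, M ≤ n → e n ≤ q ^ k * B + ε / 2 := by
    intro k
    induction k with
    | zero =>
        intro n hn
        have := (he n (le_trans hMN hn)).2
        simp only [pow_zero, one_mul]
        linarith
    | succ k ih =>
        intro n hn
        have h1 : e n ≤ q * e (n + 1) + δ n := hrec n (le_trans hMN hn)
        have h3 : δ n ≤ ε * (1 - q) / 2 := hδ' n hn
        have h4 : e (n + 1) ≤ q ^ k * B + ε / 2 := ih (n + 1) (le_trans hn (Nat.le_succ _))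
        calc e n ≤ q * (q ^ k * B + ε / 2) + ε * (1 - q) / 2 := by nlinarith
        _ = q ^ (k + 1) * B + ε / 2 := by ring
  obtain ⟨k0, hk0⟩ := (Metric.tendsto_atTop.1
    (tendsto_pow_atTop_nhds_zero_of_lt_one hq0 hq1)) (ε / (2 * (B + 1))) (by positivity)
  use M
  intro n hn
  rw [Real.dist_eq, sub_zero]
  have h4 : e n ≤ q ^ k0 * B + ε / 2 := key k0 n hn
  have h6 : q ^ k0 < ε / (2 * (B + 1)) := by
    have := hk0 k0 le_rfl
    rw [Real.dist_eq, sub_zero] at this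
    exact lt_of_le_of_lt (le_abs_self _) this
  have h7 : q ^ k0 * B < ε / 2 := by
    have h8 : q ^ k0 * B ≤ q ^ k0 * (B + 1) := by nlinarith [pow_nonneg hq0 k0]
    have h9 : q ^ k0 * (B + 1) < ε / (2 * (B + 1)) * (B + 1) := by nlinarith
    have h10 : ε / (2 * (B + 1)) * (B + 1) = ε / 2 := by field_simp
    linarith
  have : 0 ≤ e n := (he n (le_trans hMN hn)).1
  rw [abs_of_nonneg this]
  linarith

/-- Affine recursion `y (n+1) = q n * y n + 1` with `q n → Q < 1`. -/
lemma lemAffine {y q : ℕ → ℝ} {Q : ℝ} (hQ0 : 0 ≤ Q) (hQ1 : Q < 1)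
    (hq0 : ∀ n, 0 ≤ q n)
    (hy : ∀ n, y (n + 1) = q n * y n + 1)
    (hq : Tendsto q atTop (nhds Q)) : Tendsto y atTop (nhds (1 / (1 - Q))) := by
  set Y : ℝ := 1 / (1 - Q) with hY
  have h1Q : (0:ℝ) < 1 - Q := by linarith
  have hYQ : Y * (1 - Q) = 1 := by rw [hY]; field_simp
  set q' : ℝ := (1 + Q) / 2 with hq'
  have hq'0 : 0 ≤ q' := by positivity
  have hq'1 : q' < 1 := by rw [hq']; linarith
  obtain ⟨N, hN⟩ := (Metric.tendsto_atTop.1 hq) ((1 - Q) / 2) (by positivity)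
  have hqle : ∀ n, N ≤ n → q n ≤ q' := by
    intro n hn
    have := hN n hn
    rw [Real.dist_eq] at this
    have := abs_lt.1 this
    rw [hq']; linarith [this.2]
  have herec : ∀ n, N ≤ n → |y (n + 1) - Y| ≤ q' * |y n - Y| + |q n - Q| * Y := by
    intro n hn
    have hid : y (n + 1) - Y = q n * (y n - Y) + (q n - Q) * Y := by
      rw [hy n]; nlinarith [hYQ]
    calc |y (n + 1) - Y| ≤ |q n * (y n - Y)| + |(q n - Q) * Y| := by
          rw [hid]; exact abs_add_le _ _
    _ = q n * |y n - Y| + |q n - Q| * Y := by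
          rw [abs_mul, abs_mul, abs_of_nonneg (hq0 n), abs_of_nonneg (by positivity : (0:ℝ) ≤ Y)]
    _ ≤ q' * |y n - Y| + |q n - Q| * Y := by
          have := hqle n hn
          nlinarith [abs_nonneg (y n - Y)]
  have hδ : Tendsto (fun n => |q n - Q| * Y) atTop (nhds 0) := by
    have : Tendsto (fun n => q n - Q) atTop (nhds 0) := by
      simpa using hq.sub (tendsto_const_nhds (x := Q))
    have := (this.abs).mul_const Y
    simpa using this
  have := lemC (e := fun n => |y n - Y|) (δ := fun n => |q n - Q| * Y) hq'0 hq'1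
    (fun n _ => abs_nonneg _) herec hδ
  rw [tendsto_iff_dist_tendsto_zero]
  simpa [Real.dist_eq] using this

/-- Affine recursion with `q n → 1` forces `y → ∞`. -/
lemma lemAtTop {y q : ℕ → ℝ} (hy0 : ∀ n, 0 ≤ y n)
    (hy : ∀ n, y (n + 1) = q n * y n + 1)
    (hq : Tendsto q atTop (nhds 1)) : Tendsto y atTop atTop := by
  rw [tendsto_atTop]
  intro M0
  rw [Filter.eventually_atTop]
  set M : ℝ := max M0 1 with hM
  have hM1 : (1:ℝ) ≤ M := le_max_right _ _
  obtain ⟨N, hN⟩ := (Metric.tendsto_atTop.1 hq) (1 / (4 * M)) (by positivity)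
  have hqb : ∀ n, N ≤ n → 1 - 1 / (4 * M) ≤ q n := by
    intro n hn
    have := abs_lt.1 ((Real.dist_eq _ _) ▸ hN n hn)
    linarith [this.1]
  have step : ∀ n, N ≤ n → min (y n + 1 / 2) (2 * M) ≤ y (n + 1) := by
    intro n hn
    have hq1 := hqb n hn
    rw [hy n]
    rcases le_total (y n) (2 * M) with h | h
    · apply le_trans (min_le_left _ _)
      have : y n * (1 / (4 * M)) ≤ 1 / 2 := by
        have h4M : (0:ℝ) < 4 * M := by linarith
        rw [mul_one_div, div_le_div_iff₀ h4M (by norm_num : (0:ℝ) < 2)]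
        nlinarith [hy0 n]
      nlinarith [hy0 n]
    · apply le_trans (min_le_right _ _)
      have : q n * y n ≥ (1 - 1 / (4 * M)) * (2 * M) := by
        have h0 : 0 ≤ 1 - 1/(4*M) := by
          have : 1/(4*M) ≤ 1/4 := by
            apply div_le_div_of_nonneg_left (by norm_num) (by norm_num) (by linarith)
          linarith
        nlinarith
      have : (1 - 1 / (4 * M)) * (2 * M) = 2 * M - 1 / 2 := by field_simp; ring
      nlinarith
  have key : ∀ k : ℕ, min ((k : ℝ) * (1 / 2)) (2 * M) ≤ y (N + k) := by
    intro k
    induction k with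
    | zero => simpa using le_trans (min_le_left _ _) (by simpa using hy0 N)
    | succ k ih =>
        have h1 := step (N + k) (Nat.le_add_right _ _)
        rcases le_total ((k:ℝ) * (1/2)) (2*M) with hc | hc
        · rw [min_eq_left hc] at ih
          have : min (((k+1:ℕ):ℝ) * (1/2)) (2*M) ≤ min (y (N+k) + 1/2) (2*M) := by
            apply min_le_min _ le_rfl
            push_cast; linarith
          exact le_trans this h1
        · rw [min_eq_right hc] at ih
          have h2 : min (y (N+k) + 1/2) (2*M) = 2*M := min_eq_right (by linarith)
          rw [h2] at h1
          exact le_trans (min_le_right _ _) h1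
  obtain ⟨k0, hk0⟩ := exists_nat_ge (4 * M)
  refine ⟨N + k0, fun n hn => ?_⟩
  have h1 := key (n - N)
  rw [Nat.add_sub_cancel' (le_trans (Nat.le_add_right _ _) hn)] at h1
  have h2 : (4:ℝ) * M ≤ (n - N : ℕ) := by
    calc (4:ℝ) * M ≤ k0 := hk0
    _ ≤ (n - N : ℕ) := by exact_mod_cast Nat.le_sub_of_add_le (by omega)
  have : min ((n - N : ℕ) * (1/2 : ℝ)) (2 * M) = 2 * M := by
    apply min_eq_right; nlinarith
  rw [this] at h1
  calc M0 ≤ M := le_max_left _ _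
  _ ≤ 2 * M := by linarith
  _ ≤ y n := h1

/-- One step of the escape phase. -/
lemma stepEscape {b h1 h2 d m : ℝ} (hm0 : 0 < m) (hm1 : m < 1) (hbm : m ≤ b) (hb1 : b < 1)
    (hh1 : -1 ≤ h1) (hh10 : h1 ≤ 0) (hh2 : -1 ≤ h2) (hh2' : h2 ≤ 1)
    (hsw : |h2 * (1 + b^2 - 2*b*h1) - ((1+b^2)*h1 - 2*b)| ≤ d * (1 + b^2 - 2*b*h1))
    (hd0 : 0 ≤ d) (hdδ : d ≤ min ((1 - ((1-m)/(1+m))^2)/16) (1/4)) :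
    h2 ≤ 0 ∧ (1 + h2)/(1 - h2) ≤ ((1-m)/(1+m))^2 * ((1 + h1)/(1 - h1)) + 3*d := by
  have hb0 : 0 < b := lt_of_lt_of_le hm0 hbm
  have hb1' : (0:ℝ) < 1 - b := by linarith
  have hb1'' : (0:ℝ) < 1 + b := by linarith
  have hm1' : (0:ℝ) < 1 - m := by linarith
  have hm1'' : (0:ℝ) < 1 + m := by linarith
  set D : ℝ := 1 + b^2 - 2*b*h1 with hDdef
  have hD : 0 < D := by nlinarith
  set h' : ℝ := ((1+b^2)*h1 - 2*b)/D with hh'def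
  have hh'D : h' * D = (1+b^2)*h1 - 2*b := by
    rw [hh'def]; field_simp
  have hsw2 : |h2 - h'| ≤ d := by
    have h1' : |(h2 - h') * D| ≤ d * D := by
      rw [sub_mul, hh'D]; exact hsw
    rwa [abs_mul, abs_of_pos hD, mul_le_mul_iff_of_pos_right hD] at h1'
  have idA : (1 - h') * D = (1 - h1)*(1+b)^2 := by
    have e : (1 - h') * D = D - ((1+b^2)*h1 - 2*b) := by rw [sub_mul, hh'D, one_mul]
    rw [e, hDdef]; ring
  have idB : (1 + h') * D = (1 + h1)*(1-b)^2 := by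
    have e : (1 + h') * D = D + ((1+b^2)*h1 - 2*b) := by rw [add_mul, hh'D, one_mul]
    rw [e, hDdef]; ring
  have h1h1 : (0:ℝ) < 1 - h1 := by linarith
  have h1h1' : (0:ℝ) ≤ 1 + h1 := by linarith
  have h1h' : 0 < 1 - h' := by nlinarith
  have h1h'' : 0 ≤ 1 + h' := by nlinarith
  have hcross : (1+h')*((1-h1)*(1+b)^2) = (1-h')*((1+h1)*(1-b)^2) := by
    calc (1+h')*((1-h1)*(1+b)^2) = (1+h')*((1-h')*D) := by rw [idA]
    _ = (1-h')*((1+h')*D) := by ring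
    _ = (1-h')*((1+h1)*(1-b)^2) := by rw [idB]
  have hY' : (1+h')/(1-h') = ((1-b)/(1+b))^2 * ((1+h1)/(1-h1)) := by
    rw [div_pow, div_mul_div_comm, div_eq_div_iff (ne_of_gt h1h') (by positivity)]
    linear_combination hcross
  set ρm : ℝ := ((1-m)/(1+m))^2 with hρm
  have hbase : (1-b)/(1+b) ≤ (1-m)/(1+m) := by
    rw [div_le_div_iff₀ hb1'' hm1'']
    nlinarith
  have hbase0 : 0 ≤ (1-b)/(1+b) := by positivity
  have hρb : ((1-b)/(1+b))^2 ≤ ρm := by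
    rw [hρm]; exact pow_le_pow_left₀ hbase0 hbase 2
  have hρm1 : ρm < 1 := by
    rw [hρm, div_pow, div_lt_one (by positivity)]
    nlinarith
  have hρm0 : 0 ≤ ρm := by positivity
  have hY1 : (1+h1)/(1-h1) ≤ 1 := by
    rw [div_le_one h1h1]; linarith
  have hY1' : 0 ≤ (1+h1)/(1-h1) := by positivity
  have hh'0 : h' ≤ 0 := by
    have e : (1+h')/(1-h') ≤ 1 := by
      rw [hY']
      calc ((1-b)/(1+b))^2 * ((1+h1)/(1-h1)) ≤ 1 * 1 :=
            mul_le_mul (le_trans hρb (le_of_lt hρm1)) hY1 hY1' zero_le_one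
      _ = 1 := by ring
    rw [div_le_one h1h'] at e
    linarith
  have hd14 : d ≤ 1/4 := le_trans hdδ (min_le_right _ _)
  have hh2u : h2 ≤ 1/4 := by
    have e := abs_le.1 hsw2
    linarith [e.2]
  have h1h2 : (0:ℝ) < 1 - h2 := by linarith
  have hLip : (1+h2)/(1-h2) ≤ (1+h')/(1-h') + 3*d := by
    have hdiff : (1+h2)/(1-h2) - (1+h')/(1-h') = 2*(h2 - h')/((1-h2)*(1-h')) := by
      field_simp; ring
    have hden : (3:ℝ)/4 ≤ (1-h2)*(1-h') := by nlinarith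
    have hnum : 2*(h2 - h') ≤ 2*d := by
      have e := abs_le.1 hsw2; linarith [e.2]
    have hfin : 2*(h2 - h')/((1-h2)*(1-h')) ≤ 3*d := by
      rw [div_le_iff₀ (by linarith : (0:ℝ) < (1-h2)*(1-h'))]
      nlinarith [mul_le_mul_of_nonneg_left hden (by linarith : (0:ℝ) ≤ 3*d)]
    linarith [hdiff ▸ hfin]
  have hYfin : (1+h2)/(1-h2) ≤ ρm * ((1+h1)/(1-h1)) + 3*d := by
    rw [hY'] at hLip
    have e : ((1-b)/(1+b))^2 * ((1+h1)/(1-h1)) ≤ ρm * ((1+h1)/(1-h1)) :=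
      mul_le_mul_of_nonneg_right hρb hY1'
    linarith
  refine ⟨?_, hYfin⟩
  have hd' : d ≤ (1 - ρm)/16 := le_trans hdδ (min_le_left _ _)
  have e : (1+h2)/(1-h2) ≤ 1 := by
    calc (1+h2)/(1-h2) ≤ ρm * ((1+h1)/(1-h1)) + 3*d := hYfin
    _ ≤ ρm * 1 + 3*((1 - ρm)/16) := by
        exact add_le_add (mul_le_mul_of_nonneg_left hY1 hρm0) (by linarith)
    _ ≤ 1 := by linarith
  rw [div_le_one h1h2] at e
  linarith

/-- One step of the trap phase. -/
lemma stepTrap {b h1 h2 d m : ℝ} (hm0 : 0 < m) (hm1 : m < 1) (hbm : m ≤ b) (hb1 : b < 1)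
    (hh1 : 0 < h1) (hh11 : h1 ≤ 1) (hh2 : 0 < h2) (hh21 : h2 ≤ 1)
    (hsw : |h2 * (1 + b^2 - 2*b*h1) - ((1+b^2)*h1 - 2*b)| ≤ d * (1 + b^2 - 2*b*h1))
    (hd0 : 0 ≤ d) (hd14 : d ≤ 1/4) :
    (1 - h1)/(1 + h1) ≤ ((1-m)/(1+m))^2 * ((1 - h2)/(1 + h2)) + 3*d ∧
    ((1+b)/(1-b))^2 * ((1 - h1)/(1 + h1)) ≤ (1 - h2)/(1 + h2) + 3*d := by
  have hb0 : 0 < b := lt_of_lt_of_le hm0 hbm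
  have hb1' : (0:ℝ) < 1 - b := by linarith
  have hb1'' : (0:ℝ) < 1 + b := by linarith
  have hm1' : (0:ℝ) < 1 - m := by linarith
  have hm1'' : (0:ℝ) < 1 + m := by linarith
  set D : ℝ := 1 + b^2 - 2*b*h1 with hDdef
  have hD : 0 < D := by nlinarith
  set h' : ℝ := ((1+b^2)*h1 - 2*b)/D with hh'def
  have hh'D : h' * D = (1+b^2)*h1 - 2*b := by rw [hh'def]; field_simp
  have hsw2 : |h2 - h'| ≤ d := by
    have h1' : |(h2 - h') * D| ≤ d * D := by rw [sub_mul, hh'D]; exact hsw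
    rwa [abs_mul, abs_of_pos hD, mul_le_mul_iff_of_pos_right hD] at h1'
  have idA : (1 - h') * D = (1 - h1)*(1+b)^2 := by
    have e : (1 - h') * D = D - ((1+b^2)*h1 - 2*b) := by rw [sub_mul, hh'D, one_mul]
    rw [e, hDdef]; ring
  have idB : (1 + h') * D = (1 + h1)*(1-b)^2 := by
    have e : (1 + h') * D = D + ((1+b^2)*h1 - 2*b) := by rw [add_mul, hh'D, one_mul]
    rw [e, hDdef]; ring
  have h1h1 : (0:ℝ) < 1 + h1 := by linarith
  have h1h1' : (0:ℝ) ≤ 1 - h1 := by linarith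
  have h1h' : 0 ≤ 1 - h' := by nlinarith
  have h1h'' : 0 < 1 + h' := by nlinarith
  have hcross : (1+h')*((1-h1)*(1+b)^2) = (1-h')*((1+h1)*(1-b)^2) := by
    calc (1+h')*((1-h1)*(1+b)^2) = (1+h')*((1-h')*D) := by rw [idA]
    _ = (1-h')*((1+h')*D) := by ring
    _ = (1-h')*((1+h1)*(1-b)^2) := by rw [idB]
  have hX' : (1-h')/(1+h') = ((1+b)/(1-b))^2 * ((1-h1)/(1+h1)) := by
    rw [div_pow, div_mul_div_comm, div_eq_div_iff (ne_of_gt h1h'') (by positivity)]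
    linear_combination -hcross
  have hh'l : -(1/4) ≤ h' := by
    have e := abs_le.1 hsw2
    linarith [e.2]
  have h1h2 : (0:ℝ) < 1 + h2 := by linarith
  have hLip : (1-h')/(1+h') ≤ (1-h2)/(1+h2) + 3*d := by
    have hdiff : (1-h')/(1+h') - (1-h2)/(1+h2) = 2*(h2 - h')/((1+h')*(1+h2)) := by
      field_simp; ring
    have hnum : 2*(h2 - h') ≤ 2*d := by
      have e := abs_le.1 hsw2; linarith [e.2]
    have hden : (3:ℝ)/4 ≤ (1+h')*(1+h2) := by nlinarith
    have hfin : 2*(h2 - h')/((1+h')*(1+h2)) ≤ 3*d := by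
      rw [div_le_iff₀ (by linarith : (0:ℝ) < (1+h')*(1+h2))]
      nlinarith [mul_le_mul_of_nonneg_left hden (by linarith : (0:ℝ) ≤ 3*d)]
    linarith [hdiff ▸ hfin]
  have hW : ((1+b)/(1-b))^2 * ((1-h1)/(1+h1)) ≤ (1-h2)/(1+h2) + 3*d := by
    rw [← hX']; exact hLip
  refine ⟨?_, hW⟩
  have hbase : (1-b)/(1+b) ≤ (1-m)/(1+m) := by
    rw [div_le_div_iff₀ hb1'' hm1'']
    nlinarith
  have hbase0 : 0 ≤ (1-b)/(1+b) := by positivity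
  have hρbm : ((1-b)/(1+b))^2 ≤ ((1-m)/(1+m))^2 := pow_le_pow_left₀ hbase0 hbase 2
  have hinv : ((1-b)/(1+b))^2 * ((1+b)/(1-b))^2 = 1 := by
    rw [div_pow, div_pow, div_mul_div_comm, div_eq_one_iff_eq (by positivity)]
    ring
  have hX2 : 0 ≤ (1-h2)/(1+h2) := by
    apply div_nonneg (by linarith) (by linarith)
  have hρb1 : ((1-b)/(1+b))^2 ≤ 1 := by
    rw [div_pow, div_le_one (by positivity)]
    nlinarith
  calc (1-h1)/(1+h1)
      = ((1-b)/(1+b))^2 * (((1+b)/(1-b))^2 * ((1-h1)/(1+h1))) := by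
        rw [← mul_assoc, hinv, one_mul]
    _ ≤ ((1-b)/(1+b))^2 * ((1-h2)/(1+h2) + 3*d) := by
        apply mul_le_mul_of_nonneg_left hW (by positivity)
    _ = ((1-b)/(1+b))^2 * ((1-h2)/(1+h2)) + ((1-b)/(1+b))^2 * (3*d) := by ring
    _ ≤ ((1-m)/(1+m))^2 * ((1-h2)/(1+h2)) + 1 * (3*d) := by
        exact add_le_add (mul_le_mul_of_nonneg_right hρbm hX2)
          (mul_le_mul_of_nonneg_right hρb1 (by linarith))
    _ = ((1-m)/(1+m))^2 * ((1-h2)/(1+h2)) + 3*d := by ring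

/-- The main dynamics lemma: `h n → -1`. -/
lemma dynamics {b h d a : ℕ → ℝ} {ℓ : ℝ} (hℓ0 : 0 < ℓ)
    (hb : Tendsto b atTop (nhds ℓ))
    (hb0 : ∀ n, 0 ≤ b n) (hb1 : ∀ n, b n < 1)
    (hh : ∀ n, -1 ≤ h n ∧ h n ≤ 1)
    (ha : ∀ n, 0 < a n)
    (hrec : ∀ n, a (n+1) * (1 - (b n)^2) = a n * (1 + (b n)^2 - 2*(b n)*(h n)))
    (hsw : ∀ n, |h (n+1) * (1 + (b n)^2 - 2*(b n)*(h n)) - ((1+(b n)^2)*(h n) - 2*(b n))|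
      ≤ d n * (1 + (b n)^2 - 2*(b n)*(h n)))
    (hd : Tendsto d atTop (nhds 0))
    (hns : ¬ Summable a) : Tendsto h atTop (nhds (-1)) := by
  have hℓ1 : ℓ ≤ 1 := le_of_tendsto hb (Eventually.of_forall fun n => le_of_lt (hb1 n))
  set m : ℝ := ℓ/2 with hmdef
  have hm0 : 0 < m := by rw [hmdef]; linarith
  have hm1 : m < 1 := by rw [hmdef]; linarith
  set ρm : ℝ := ((1-m)/(1+m))^2 with hρmdef
  have hρm0 : 0 ≤ ρm := by positivity
  have hρm1 : ρm < 1 := by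
    rw [hρmdef, div_pow, div_lt_one (by positivity)]
    nlinarith
  set δ₀ : ℝ := min ((1 - ρm)/16) (1/4) with hδ₀def
  have hδ₀0 : 0 < δ₀ := by
    rw [hδ₀def]; apply lt_min (by linarith) (by norm_num)
  have hD : ∀ n, 0 < 1 + (b n)^2 - 2*(b n)*(h n) := by
    intro n; nlinarith [hb0 n, hb1 n, (hh n).1, (hh n).2]
  have hd0 : ∀ n, 0 ≤ d n := by
    intro n
    by_contra hc
    push_neg at hc
    have h1 := hsw n
    nlinarith [abs_nonneg (h (n+1) * (1 + (b n)^2 - 2*(b n)*(h n))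
      - ((1+(b n)^2)*(h n) - 2*(b n))), hD n]
  -- eventual bounds
  obtain ⟨Nb, hNb⟩ := (Metric.tendsto_atTop.1 hb) m (by rw [hmdef]; linarith)
  obtain ⟨Nd, hNd⟩ := (Metric.tendsto_atTop.1 hd) δ₀ hδ₀0
  set N₁ : ℕ := max Nb Nd with hN₁def
  have hbm : ∀ n, N₁ ≤ n → m ≤ b n := by
    intro n hn
    have := hNb n (le_trans (le_max_left _ _) hn)
    rw [Real.dist_eq] at this
    have := abs_lt.1 this
    rw [hmdef]; linarith [this.1]
  have hdδ : ∀ n, N₁ ≤ n → d n ≤ δ₀ := by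
    intro n hn
    have := hNd n (le_trans (le_max_right _ _) hn)
    rw [Real.dist_eq, sub_zero] at this
    exact le_of_lt (lt_of_abs_lt this)
  have hd14 : ∀ n, N₁ ≤ n → d n ≤ 1/4 := fun n hn =>
    le_trans (hdδ n hn) (le_trans (min_le_right _ _) le_rfl)
  -- Part B : h n ≤ 0 infinitely often
  have keyB : ∀ N₂ : ℕ, ∃ n, N₂ ≤ n ∧ h n ≤ 0 := by
    intro N₂
    by_contra hcon
    push_neg at hcon
    set M : ℕ := max N₂ N₁ with hMdef
    have hpos : ∀ n, M ≤ n → 0 < h n := fun n hn =>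
      hcon n (le_trans (le_max_left _ _) hn)
    have hMN₁ : N₁ ≤ M := le_max_right _ _
    set X : ℕ → ℝ := fun k => (1 - h k)/(1 + h k) with hXdef
    have hT : ∀ n, M ≤ n →
        X n ≤ ρm * X (n+1) + 3*(d n) ∧ ((1+b n)/(1-b n))^2 * X n ≤ X (n+1) + 3*(d n) := by
      intro n hn
      exact stepTrap hm0 hm1 (hbm n (le_trans hMN₁ hn)) (hb1 n)
        (hpos n hn) (hh n).2 (hpos (n+1) (le_trans hn (Nat.le_succ _))) (hh (n+1)).2
        (hsw n) (hd0 n) (hd14 n (le_trans hMN₁ hn))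
    have hXb : ∀ n, M ≤ n → 0 ≤ X n ∧ X n ≤ 1 := by
      intro n hn
      have h1 := hpos n hn
      have h2 := (hh n).2
      constructor
      · apply div_nonneg (by linarith) (by linarith)
      · rw [div_le_one (by linarith)]; linarith
    have hδ3 : Tendsto (fun n => 3 * d n) atTop (nhds 0) := by
      simpa using hd.const_mul 3
    have hX0 : Tendsto X atTop (nhds 0) :=
      lemC' hρm0 hρm1 zero_le_one hXb (fun n hn => (hT n hn).1) hδ3
    -- W → 0
    have hW0 : Tendsto (fun n => ((1+b n)/(1-b n))^2 * X n) atTop (nhds 0) := by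
      apply squeeze_zero' (g := fun n => X (n+1) + 3*(d n))
      · filter_upwards [eventually_ge_atTop M] with n hn
        have h1 := hbm n (le_trans hMN₁ hn)
        have h2 := hb1 n
        apply mul_nonneg (by positivity) (hXb n hn).1
      · filter_upwards [eventually_ge_atTop M] with n hn
        exact (hT n hn).2
      · have : Tendsto (fun n => X (n+1)) atTop (nhds 0) :=
          hX0.comp (tendsto_add_atTop_nat 1)
        simpa using this.add hδ3
    -- ratio bound
    set ε : ℝ := m/(4*(1+m)) with hεdef
    have hε0 : 0 < ε := by rw [hεdef]; positivity
    obtain ⟨N₃', hN₃'⟩ := (Metric.tendsto_atTop.1 hW0) ε hε0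
    set N₃ : ℕ := max N₃' M with hN₃def
    have hratio : ∀ n, N₃ ≤ n → a (n+1) ≤ (1/(1+m)) * a n := by
      intro n hn
      have hnM : M ≤ n := le_trans (le_max_right _ _) hn
      have hWε : ((1+b n)/(1-b n))^2 * X n ≤ ε := by
        have := hN₃' n (le_trans (le_max_left _ _) hn)
        rw [Real.dist_eq, sub_zero] at this
        exact le_of_lt (lt_of_abs_lt this)
      have hb1' : (0:ℝ) < 1 - b n := by linarith [hb1 n]
      have hb1'' : (0:ℝ) < 1 + b n := by linarith [hb0 n]
      have hbmn : m ≤ b n := hbm n (le_trans hMN₁ hnM)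
      have hhn := hpos n hnM
      have hhn1 := (hh n).2
      -- clear denominators in hWε : (1+b)^2 * X ≤ ε * (1-b)^2
      have hXW : (1 + b n)^2 * X n ≤ ε * (1 - b n)^2 := by
        have e1 : ((1+b n)/(1-b n))^2 * X n = (1+b n)^2 * X n / (1-b n)^2 := by
          rw [div_pow]; ring
        rw [e1, div_le_iff₀ (by positivity)] at hWε
        linarith
      have hXh : (1 - h n) = X n * (1 + h n) := by
        rw [hXdef]; field_simp
      have hX0' : 0 ≤ X n := (hXb n hnM).1
      -- D*(1+m) ≤ 1 - b^2
      have hx_le : X n ≤ ε * (1 - b n)^2 := by nlinarith [sq_nonneg (b n)]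
      have hDb : 1 + (b n)^2 - 2*(b n)*(h n) ≤ (1 - b n)^2 + 4*(X n) := by nlinarith
      have e1 : (1 + 4*ε)*(1+m) = 1 + 2*m := by rw [hεdef]; field_simp; ring
      have e2 : 1 + (b n)^2 - 2*(b n)*(h n) ≤ (1 - b n)^2*(1+4*ε) := by nlinarith [hDb, hx_le]
      have e3 : (1 - b n)*(1+2*m) ≤ 1 + b n := by nlinarith [mul_nonneg (le_of_lt hm0) (hb0 n)]
      have e4 : (1 - b n)^2*(1+2*m) ≤ (1 - b n)*(1 + b n) := by
        nlinarith [mul_le_mul_of_nonneg_left e3 (le_of_lt hb1')]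
      have hkey : (1 + (b n)^2 - 2*(b n)*(h n)) * (1+m) ≤ 1 - (b n)^2 := by
        calc (1 + (b n)^2 - 2*(b n)*(h n)) * (1+m) ≤ ((1 - b n)^2*(1+4*ε)) * (1+m) := by
              exact mul_le_mul_of_nonneg_right e2 (by linarith)
        _ = (1 - b n)^2*((1+4*ε)*(1+m)) := by ring
        _ = (1 - b n)^2*(1+2*m) := by rw [e1]
        _ ≤ 1 - (b n)^2 := by nlinarith [e4]
      have h5 := hrec n
      have ha' := ha n
      have han1 := ha (n+1)
      have hb2 : (0:ℝ) < 1 - (b n)^2 := by nlinarith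
      have hgoal : (a (n+1) * (1+m)) * (1 - (b n)^2) ≤ a n * (1 - (b n)^2) := by
        have e : (a (n+1) * (1+m)) * (1 - (b n)^2)
            = (a n * (1 + (b n)^2 - 2*(b n)*(h n))) * (1+m) := by
          rw [← h5]; ring
        rw [e]
        calc (a n * (1 + (b n)^2 - 2*(b n)*(h n))) * (1+m)
            = a n * ((1 + (b n)^2 - 2*(b n)*(h n)) * (1+m)) := by ring
        _ ≤ a n * (1 - (b n)^2) := by
            exact mul_le_mul_of_nonneg_left hkey (le_of_lt ha')
      have h6 : a (n+1) * (1+m) ≤ a n := le_of_mul_le_mul_right hgoal hb2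
      rw [one_div, inv_mul_eq_div, le_div_iff₀ (by linarith : (0:ℝ) < 1+m)]
      exact h6
    have hsum : Summable a := by
      apply summable_of_ratio_norm_eventually_le
        (r := 1/(1+m)) (by rw [div_lt_one (by linarith : (0:ℝ) < 1+m)]; linarith)
      filter_upwards [eventually_ge_atTop N₃] with n hn
      rw [Real.norm_eq_abs, Real.norm_eq_abs, abs_of_pos (ha _), abs_of_pos (ha _)]
      exact hratio n hn
    exact hns hsum
  -- Part A : escape
  obtain ⟨n₀, hn₀N₁, hn₀h⟩ := keyB N₁
  set Y : ℕ → ℝ := fun k => (1 + h k)/(1 - h k) with hYdef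
  have hδ3 : Tendsto (fun n => 3 * d n) atTop (nhds 0) := by
    simpa using hd.const_mul 3
  have hstay : ∀ k, h (n₀ + k) ≤ 0 := by
    intro k
    induction k with
    | zero => simpa using hn₀h
    | succ k ih =>
        have hk : N₁ ≤ n₀ + k := le_trans hn₀N₁ (Nat.le_add_right _ _)
        have := (stepEscape hm0 hm1 (hbm _ hk) (hb1 _) (hh (n₀+k)).1 ih
          (hh (n₀+k+1)).1 (hh (n₀+k+1)).2 (hsw (n₀+k)) (hd0 _) (hdδ _ hk)).1
        exact this
  have hstay' : ∀ n, n₀ ≤ n → h n ≤ 0 := by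
    intro n hn
    have := hstay (n - n₀)
    rwa [Nat.add_sub_cancel' hn] at this
  have hYrec : ∀ n, n₀ ≤ n → Y (n+1) ≤ ρm * Y n + 3 * d n := by
    intro n hn
    have hk : N₁ ≤ n := le_trans hn₀N₁ hn
    have := (stepEscape hm0 hm1 (hbm _ hk) (hb1 _) (hh n).1 (hstay' n hn)
      (hh (n+1)).1 (hh (n+1)).2 (hsw n) (hd0 _) (hdδ _ hk)).2
    calc Y (n+1) ≤ ρm * ((1 + h n)/(1 - h n)) + 3 * d n := this
    _ = ρm * Y n + 3 * d n := by rw [hYdef]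
  have hY0 : ∀ n, n₀ ≤ n → 0 ≤ Y n := by
    intro n hn
    have h1 := (hh n).1
    have h2 := hstay' n hn
    apply div_nonneg (by linarith) (by linarith)
  have hYten : Tendsto Y atTop (nhds 0) := lemC hρm0 hρm1 hY0 hYrec hδ3
  have hh1 : Tendsto (fun n => 1 + h n) atTop (nhds 0) := by
    apply squeeze_zero' (g := fun n => 2 * Y n)
    · filter_upwards with n; linarith [(hh n).1]
    · filter_upwards [eventually_ge_atTop n₀] with n hn
      have h2 := hstay' n hn
      have h3 : (0:ℝ) < 1 - h n := by linarith
      have hident : 1 + h n = Y n * (1 - h n) := by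
        rw [hYdef]; field_simp
      rw [hident]
      calc Y n * (1 - h n) ≤ Y n * 2 := by
            apply mul_le_mul_of_nonneg_left (by linarith [(hh n).1]) (hY0 n hn)
      _ = 2 * Y n := by ring
    · simpa using hYten.const_mul 2
  have := hh1.sub_const 1
  simp only [add_sub_cancel_left] at this
  simpa using this

end OPUCAux

/-- The orthonormal Szegő polynomials `(φ_n(ζ), φ*_n(ζ))` defined by the Szegő recursion. -/
noncomputable def szegoPhi (α : ℕ → ℂ) (ζ : ℂ) : ℕ → ℂ × ℂ
  | 0 => (1, 1)
  | n + 1 =>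
      (((Real.sqrt (1 - ‖α n‖ ^ 2) : ℝ) : ℂ))⁻¹ •
        (ζ * (szegoPhi α ζ n).1 - (starRingEnd ℂ) (α n) * (szegoPhi α ζ n).2,
         (szegoPhi α ζ n).2 - α n * ζ * (szegoPhi α ζ n).1)

/-- The CD kernel diagonal `K_n(ζ,ζ) = Σ_{j=0}^n |φ_j(ζ)|²`. -/
noncomputable def szegoK (α : ℕ → ℂ) (ζ : ℂ) (n : ℕ) : ℝ :=
  ∑ j ∈ Finset.range (n + 1), ‖(szegoPhi α ζ j).1‖ ^ 2

/-- The perturbation `Δ_n(ζ) = ρ_n conj(φ_{n+1}(ζ)) φ*_n(ζ) / ((1-γ)γ⁻¹ + K_n(ζ,ζ))` of the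
`n`-th Verblunsky coefficient upon insertion of a pure point of weight `γ` at `ζ`. -/
noncomputable def szegoDelta (α : ℕ → ℂ) (ζ : ℂ) (γ : ℝ) (n : ℕ) : ℂ :=
  ((Real.sqrt (1 - ‖α n‖ ^ 2) : ℝ) : ℂ) *
    (starRingEnd ℂ) ((szegoPhi α ζ (n + 1)).1) * (szegoPhi α ζ n).2 /
    ((((1 - γ) * γ⁻¹ + szegoK α ζ n : ℝ)) : ℂ)


namespace OPUCAux

/-- `a n = |φ_n(ζ)|²`. -/
noncomputable def aSeq (α : ℕ → ℂ) (ζ : ℂ) (n : ℕ) : ℝ :=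
  ‖(szegoPhi α ζ n).1‖ ^ 2

/-- `S n = ζ^(2n-1) conj(φ_n(ζ))²`. -/
noncomputable def sSeq (α : ℕ → ℂ) (ζ : ℂ) (n : ℕ) : ℂ :=
  ζ ^ (2*n) * ((starRingEnd ℂ) ((szegoPhi α ζ n).1)) ^ 2 * ζ⁻¹

/-- phase of the rotated Verblunsky coefficient. -/
noncomputable def uSeq (α : ℕ → ℂ) (ζ : ℂ) (n : ℕ) : ℂ :=
  if α n = 0 then 1 else (ζ ^ n * α n) / (‖α n‖ : ℂ)

/-- `h n = Re(conj(u n) S n)/a n`. -/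
noncomputable def hSeq (α : ℕ → ℂ) (ζ : ℂ) (n : ℕ) : ℝ :=
  ((starRingEnd ℂ) (uSeq α ζ n) * sSeq α ζ n).re / aSeq α ζ n

variable {α : ℕ → ℂ} {ζ : ℂ}

lemma zeta_ne (hζ : ‖ζ‖ = 1) : ζ ≠ 0 := by
  intro h; rw [h] at hζ; simp at hζ

lemma conj_zeta (hζ : ‖ζ‖ = 1) : (starRingEnd ℂ) ζ = ζ⁻¹ := by
  have h1 : ζ * (starRingEnd ℂ) ζ = 1 := by
    rw [Complex.mul_conj]
    norm_cast
    rw [Complex.normSq_eq_norm_sq, hζ]; norm_num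
  field_simp [zeta_ne hζ] at h1 ⊢
  linear_combination h1

lemma rho_pos (hα : ∀ n, ‖α n‖ < 1) (n : ℕ) :
    0 < Real.sqrt (1 - ‖α n‖ ^ 2) := by
  apply Real.sqrt_pos.2
  nlinarith [hα n, norm_nonneg (α n)]

lemma rho_sq (hα : ∀ n, ‖α n‖ < 1) (n : ℕ) :
    ((Real.sqrt (1 - ‖α n‖ ^ 2) : ℝ) : ℂ) ^ 2
      = ((1 - ‖α n‖ ^ 2 : ℝ) : ℂ) := by
  norm_cast
  rw [Real.sq_sqrt]
  nlinarith [hα n, norm_nonneg (α n)]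

lemma rho_ne (hα : ∀ n, ‖α n‖ < 1) (n : ℕ) :
    ((Real.sqrt (1 - ‖α n‖ ^ 2) : ℝ) : ℂ) ≠ 0 := by
  simpa using ne_of_gt (rho_pos hα n)

lemma phi_rec (α : ℕ → ℂ) (ζ : ℂ) (hα : ∀ n, ‖α n‖ < 1) (n : ℕ) :
    ((Real.sqrt (1 - ‖α n‖ ^ 2) : ℝ) : ℂ) * (szegoPhi α ζ (n+1)).1
      = ζ * (szegoPhi α ζ n).1 - (starRingEnd ℂ) (α n) * (szegoPhi α ζ n).2 := by
  have hρ := rho_ne hα n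
  rw [szegoPhi]
  simp only [Prod.smul_fst, smul_eq_mul]
  field_simp

lemma phiStar_rec (α : ℕ → ℂ) (ζ : ℂ) (hα : ∀ n, ‖α n‖ < 1) (n : ℕ) :
    ((Real.sqrt (1 - ‖α n‖ ^ 2) : ℝ) : ℂ) * (szegoPhi α ζ (n+1)).2
      = (szegoPhi α ζ n).2 - α n * ζ * (szegoPhi α ζ n).1 := by
  have hρ := rho_ne hα n
  rw [szegoPhi]
  simp only [Prod.smul_snd, smul_eq_mul]
  field_simp

lemma phiStar_eq (hα : ∀ n, ‖α n‖ < 1) (hζ : ‖ζ‖ = 1) :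
    ∀ n, (szegoPhi α ζ n).2 = ζ^n * (starRingEnd ℂ) ((szegoPhi α ζ n).1) := by
  intro n
  induction n with
  | zero => simp [szegoPhi]
  | succ n ih =>
      have h1 := phi_rec α ζ hα n
      have h2 := phiStar_rec α ζ hα n
      have hρ := rho_ne hα n
      have hz := zeta_ne hζ
      have hcz := conj_zeta hζ
      -- conj of h1
      have h3 := congrArg (starRingEnd ℂ) h1
      simp only [map_mul, map_sub, Complex.conj_ofReal, Complex.conj_conj] at h3
      rw [hcz] at h3
      have hconjQ : (starRingEnd ℂ) ((szegoPhi α ζ n).2) = (ζ⁻¹)^n * (szegoPhi α ζ n).1 := by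
        rw [ih, map_mul, map_pow, hcz, Complex.conj_conj]
      rw [hconjQ] at h3
      have e : ((Real.sqrt (1 - ‖α n‖ ^ 2) : ℝ) : ℂ) * (szegoPhi α ζ (n+1)).2
          = ((Real.sqrt (1 - ‖α n‖ ^ 2) : ℝ) : ℂ)
            * (ζ^(n+1) * (starRingEnd ℂ) ((szegoPhi α ζ (n+1)).1)) := by
        calc ((Real.sqrt (1 - ‖α n‖ ^ 2) : ℝ) : ℂ) * (szegoPhi α ζ (n+1)).2
            = (szegoPhi α ζ n).2 - α n * ζ * (szegoPhi α ζ n).1 := h2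
        _ = ζ^(n+1) * (ζ⁻¹ * (starRingEnd ℂ) ((szegoPhi α ζ n).1)
              - α n * ((ζ⁻¹)^n * (szegoPhi α ζ n).1)) := by
            rw [ih]; simp only [inv_pow]; field_simp; ring
        _ = ζ^(n+1) * (((Real.sqrt (1 - ‖α n‖ ^ 2) : ℝ) : ℂ)
              * (starRingEnd ℂ) ((szegoPhi α ζ (n+1)).1)) := by rw [h3]
        _ = _ := by ring
      exact mul_left_cancel₀ hρ e

lemma aSeq_pos (hα : ∀ n, ‖α n‖ < 1) (hζ : ‖ζ‖ = 1) (n : ℕ) :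
    0 < ‖(szegoPhi α ζ n).1‖ := by
  induction n with
  | zero => simp [szegoPhi]
  | succ n ih =>
      have h1 := phi_rec α ζ hα n
      have hρ := rho_ne hα n
      have hne : ζ * (szegoPhi α ζ n).1 - (starRingEnd ℂ) (α n) * (szegoPhi α ζ n).2 ≠ 0 := by
        intro hc
        have e1 : ‖ζ * (szegoPhi α ζ n).1‖
            = ‖(starRingEnd ℂ) (α n) * (szegoPhi α ζ n).2‖ := by
          rw [sub_eq_zero] at hc; rw [hc]
        rw [norm_mul, norm_mul, hζ, one_mul, Complex.norm_conj,
          phiStar_eq hα hζ n, norm_mul, norm_pow, hζ, one_pow, one_mul, Complex.norm_conj] at e1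
        nlinarith [hα n, ih, norm_nonneg (α n)]
      have : (szegoPhi α ζ (n+1)).1 ≠ 0 := by
        intro hc
        rw [hc, mul_zero] at h1
        exact hne h1.symm
      exact norm_pos_iff.mpr this

lemma conjP_rec (hα : ∀ n, ‖α n‖ < 1) (hζ : ‖ζ‖ = 1) (n : ℕ) :
    ((Real.sqrt (1 - ‖α n‖ ^ 2) : ℝ) : ℂ)
        * (starRingEnd ℂ) ((szegoPhi α ζ (n+1)).1)
      = ζ⁻¹ * (starRingEnd ℂ) ((szegoPhi α ζ n).1)
        - α n * (ζ^n)⁻¹ * (szegoPhi α ζ n).1 := by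
  have h3 := congrArg (starRingEnd ℂ) (phi_rec α ζ hα n)
  simp only [map_mul, map_sub, Complex.conj_ofReal, Complex.conj_conj] at h3
  rw [conj_zeta hζ, phiStar_eq hα hζ n, map_mul, map_pow, conj_zeta hζ,
    Complex.conj_conj, inv_pow] at h3
  rw [h3]; ring

lemma a_coe (n : ℕ) : ((aSeq α ζ n : ℝ) : ℂ)
    = (starRingEnd ℂ) ((szegoPhi α ζ n).1) * (szegoPhi α ζ n).1 := by
  rw [aSeq, Complex.sq_norm]
  rw [← Complex.mul_conj]
  push_cast
  ring

lemma conj_sSeq (hζ : ‖ζ‖ = 1) (n : ℕ) :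
    (starRingEnd ℂ) (sSeq α ζ n) = ((ζ^n)⁻¹)^2 * ((szegoPhi α ζ n).1)^2 * ζ := by
  rw [sSeq, map_mul, map_mul, map_pow, map_pow, conj_zeta hζ, map_inv₀, conj_zeta hζ,
    Complex.conj_conj, inv_inv, inv_pow, pow_mul]
  rw [inv_pow, ← pow_mul, ← pow_mul, Nat.mul_comm n 2]

lemma E1 (hα : ∀ n, ‖α n‖ < 1) (hζ : ‖ζ‖ = 1) (n : ℕ) :
    ((1 - ‖α n‖ ^ 2 : ℝ) : ℂ) * sSeq α ζ (n+1)
      = sSeq α ζ n - 2*(ζ^n * α n)*((aSeq α ζ n : ℝ) : ℂ)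
        + (ζ^n * α n)^2 * (starRingEnd ℂ) (sSeq α ζ n) := by
  have hz := zeta_ne hζ
  have hw : ζ^n ≠ 0 := pow_ne_zero _ hz
  have h3 := conjP_rec hα hζ n
  have e1 : ((1 - ‖α n‖ ^ 2 : ℝ) : ℂ) * sSeq α ζ (n+1)
      = (ζ^n)^2 * ζ^2 * (((Real.sqrt (1 - ‖α n‖ ^ 2) : ℝ) : ℂ)
          * (starRingEnd ℂ) ((szegoPhi α ζ (n+1)).1))^2 * ζ⁻¹ := by
    rw [← rho_sq hα n, sSeq]
    have : ζ ^ (2*(n+1)) = (ζ^n)^2 * ζ^2 := by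
      rw [← pow_mul, ← pow_add]; ring_nf
    rw [this]; ring
  rw [e1, h3, conj_sSeq hζ, a_coe, sSeq, show 2*n = n*2 from Nat.mul_comm 2 n, pow_mul]
  field_simp
  ring

lemma beta_eq (n : ℕ) : ζ^n * α n = ((‖α n‖ : ℝ) : ℂ) * uSeq α ζ n := by
  rw [uSeq]
  by_cases h : α n = 0
  · simp [h]
  · rw [if_neg h]
    have : (‖α n‖ : ℂ) ≠ 0 := by
      simpa using norm_ne_zero_iff.mpr h
    field_simp

lemma u_abs (hζ : ‖ζ‖ = 1) (n : ℕ) : ‖uSeq α ζ n‖ = 1 := by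
  rw [uSeq]
  by_cases h : α n = 0
  · simp [h]
  · rw [if_neg h]
    rw [norm_div, norm_mul, norm_pow, hζ, one_pow, one_mul, Complex.norm_real, Real.norm_eq_abs,
      abs_of_nonneg (norm_nonneg _)]
    exact div_self (norm_ne_zero_iff.mpr h)

lemma u_conj_mul (hζ : ‖ζ‖ = 1) (n : ℕ) :
    (starRingEnd ℂ) (uSeq α ζ n) * uSeq α ζ n = 1 := by
  rw [mul_comm, Complex.mul_conj]
  norm_cast
  rw [Complex.normSq_eq_norm_sq, u_abs hζ]; norm_num

lemma abs_sSeq (hζ : ‖ζ‖ = 1) (n : ℕ) :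
    ‖sSeq α ζ n‖ = aSeq α ζ n := by
  rw [sSeq, norm_mul, norm_mul, norm_pow, norm_pow, hζ, one_pow, one_mul, norm_inv, hζ,
    Complex.norm_conj, aSeq]
  norm_num

-- E2 complex then real
lemma E2c (hα : ∀ n, ‖α n‖ < 1) (hζ : ‖ζ‖ = 1) (n : ℕ) :
    ((aSeq α ζ (n+1) : ℝ) : ℂ) * ((1 - ‖α n‖ ^ 2 : ℝ) : ℂ)
      = ((aSeq α ζ n : ℝ) : ℂ) * (1 + ((‖α n‖ : ℝ) : ℂ)^2)
        - ((ζ^n * α n) * (starRingEnd ℂ) (sSeq α ζ n)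
            + (starRingEnd ℂ) (ζ^n * α n) * sSeq α ζ n) := by
  have hz := zeta_ne hζ
  have hw : ζ^n ≠ 0 := pow_ne_zero _ hz
  have h3 := conjP_rec hα hζ n
  have h1 := phi_rec α ζ hα n
  rw [phiStar_eq hα hζ n] at h1
  have e1 : ((aSeq α ζ (n+1) : ℝ) : ℂ) * ((1 - ‖α n‖ ^ 2 : ℝ) : ℂ)
      = (((Real.sqrt (1 - ‖α n‖ ^ 2) : ℝ) : ℂ)
          * (starRingEnd ℂ) ((szegoPhi α ζ (n+1)).1))
        * (((Real.sqrt (1 - ‖α n‖ ^ 2) : ℝ) : ℂ) * (szegoPhi α ζ (n+1)).1) := by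
    rw [a_coe, ← rho_sq hα n]; ring
  have habs : ((‖α n‖ : ℝ) : ℂ)^2 = α n * (starRingEnd ℂ) (α n) := by
    rw [← Complex.ofReal_pow, Complex.sq_norm, Complex.mul_conj]
  rw [e1, h1, h3, conj_sSeq hζ, a_coe, habs, map_mul, map_pow, conj_zeta hζ, sSeq,
    show 2*n = n*2 from Nat.mul_comm 2 n, pow_mul, inv_pow]
  simp only [inv_pow]
  field_simp
  ring

lemma HaH (hα : ∀ n, ‖α n‖ < 1) (hζ : ‖ζ‖ = 1) (n : ℕ) :
    hSeq α ζ n * aSeq α ζ n = ((starRingEnd ℂ) (uSeq α ζ n) * sSeq α ζ n).re := by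
  have ha : aSeq α ζ n ≠ 0 := by
    have := aSeq_pos hα hζ n
    rw [aSeq]; positivity
  rw [hSeq]; field_simp

lemma aE (hα : ∀ n, ‖α n‖ < 1) (hζ : ‖ζ‖ = 1) (n : ℕ) :
    aSeq α ζ (n+1) * (1 - ‖α n‖^2)
      = aSeq α ζ n * (1 + ‖α n‖^2
          - 2*(‖α n‖)*(hSeq α ζ n)) := by
  have h := E2c hα hζ n
  rw [beta_eq n] at h
  simp only [map_mul, Complex.conj_ofReal] at h
  have key : ((‖α n‖:ℝ):ℂ) * uSeq α ζ n * (starRingEnd ℂ) (sSeq α ζ n)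
      + ((‖α n‖:ℝ):ℂ) * (starRingEnd ℂ) (uSeq α ζ n) * sSeq α ζ n
      = ((2 * ‖α n‖
          * ((starRingEnd ℂ) (uSeq α ζ n) * sSeq α ζ n).re : ℝ) : ℂ) := by
    have e1 : ((‖α n‖:ℝ):ℂ) * uSeq α ζ n * (starRingEnd ℂ) (sSeq α ζ n)
        = (starRingEnd ℂ) (((‖α n‖:ℝ):ℂ) * (starRingEnd ℂ) (uSeq α ζ n)
            * sSeq α ζ n) := by
      simp only [map_mul, Complex.conj_ofReal, Complex.conj_conj]
    rw [e1, add_comm, Complex.add_conj]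
    have e2 : (((‖α n‖:ℝ):ℂ) * (starRingEnd ℂ) (uSeq α ζ n) * sSeq α ζ n).re
        = ‖α n‖ * ((starRingEnd ℂ) (uSeq α ζ n) * sSeq α ζ n).re := by
      rw [mul_assoc]
      simp [Complex.mul_re]
    rw [e2]
    push_cast
    ring
  rw [key] at h
  have h2 : aSeq α ζ (n+1) * (1 - ‖α n‖^2)
      = aSeq α ζ n * (1 + ‖α n‖^2)
        - 2 * ‖α n‖ * ((starRingEnd ℂ) (uSeq α ζ n) * sSeq α ζ n).re := by
    have := h
    push_cast at this
    apply Complex.ofReal_injective; push_cast; linear_combination this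
  have h3 := HaH hα hζ n
  linear_combination h2 + 2*(‖α n‖) * h3

lemma E3 (hα : ∀ n, ‖α n‖ < 1) (hζ : ‖ζ‖ = 1) (n : ℕ) :
    ((starRingEnd ℂ) (uSeq α ζ n) * sSeq α ζ (n+1)).re * (1 - ‖α n‖^2)
      = aSeq α ζ n * ((1 + ‖α n‖^2) * hSeq α ζ n - 2*‖α n‖) := by
  have h := E1 hα hζ n
  have e : ((1 - ‖α n‖ ^ 2 : ℝ) : ℂ)
        * ((starRingEnd ℂ) (uSeq α ζ n) * sSeq α ζ (n+1))
      = (starRingEnd ℂ) (uSeq α ζ n) * sSeq α ζ n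
        - 2*((‖α n‖:ℝ):ℂ)*((aSeq α ζ n : ℝ) : ℂ)
        + ((‖α n‖:ℝ):ℂ)^2 * (uSeq α ζ n * (starRingEnd ℂ) (sSeq α ζ n)) := by
    have e0 : (starRingEnd ℂ) (uSeq α ζ n) * (((1 - ‖α n‖ ^ 2 : ℝ) : ℂ)
        * sSeq α ζ (n+1)) = (starRingEnd ℂ) (uSeq α ζ n) * (sSeq α ζ n
          - 2*(ζ^n * α n)*((aSeq α ζ n : ℝ) : ℂ)
          + (ζ^n * α n)^2 * (starRingEnd ℂ) (sSeq α ζ n)) := by rw [h]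
    have hcu : (starRingEnd ℂ) (uSeq α ζ n) * (ζ^n * α n)
        = ((‖α n‖:ℝ):ℂ) := by
      rw [beta_eq n, ← mul_assoc, mul_comm ((starRingEnd ℂ) (uSeq α ζ n)), mul_assoc,
        u_conj_mul hζ, mul_one]
    have hcu2 : (starRingEnd ℂ) (uSeq α ζ n) * (ζ^n * α n)^2
        = ((‖α n‖:ℝ):ℂ)^2 * uSeq α ζ n := by
      rw [beta_eq n, mul_pow, ← mul_assoc]
      rw [show (starRingEnd ℂ) (uSeq α ζ n) * ((‖α n‖:ℝ):ℂ)^2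
          = ((‖α n‖:ℝ):ℂ)^2 * (starRingEnd ℂ) (uSeq α ζ n) from mul_comm _ _]
      rw [mul_assoc, sq (uSeq α ζ n), ← mul_assoc (starRingEnd ℂ (uSeq α ζ n)),
        u_conj_mul hζ, one_mul]
    calc ((1 - ‖α n‖ ^ 2 : ℝ) : ℂ)
          * ((starRingEnd ℂ) (uSeq α ζ n) * sSeq α ζ (n+1))
        = (starRingEnd ℂ) (uSeq α ζ n) * (((1 - ‖α n‖ ^ 2 : ℝ) : ℂ)
          * sSeq α ζ (n+1)) := by ring
      _ = (starRingEnd ℂ) (uSeq α ζ n) * (sSeq α ζ n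
          - 2*(ζ^n * α n)*((aSeq α ζ n : ℝ) : ℂ)
          + (ζ^n * α n)^2 * (starRingEnd ℂ) (sSeq α ζ n)) := e0
      _ = (starRingEnd ℂ) (uSeq α ζ n) * sSeq α ζ n
          - 2*((starRingEnd ℂ) (uSeq α ζ n) * (ζ^n * α n))*((aSeq α ζ n : ℝ) : ℂ)
          + ((starRingEnd ℂ) (uSeq α ζ n) * (ζ^n * α n)^2)
            * (starRingEnd ℂ) (sSeq α ζ n) := by ring
      _ = _ := by rw [hcu, hcu2]; ring
  rw [show (2:ℂ)*((‖α n‖:ℝ):ℂ)*((aSeq α ζ n : ℝ):ℂ)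
      = ((2*‖α n‖*aSeq α ζ n :ℝ):ℂ) by push_cast; ring,
    show ((‖α n‖:ℝ):ℂ)^2 = ((‖α n‖^2:ℝ):ℂ) by push_cast; ring] at e
  have hucs : (uSeq α ζ n * (starRingEnd ℂ) (sSeq α ζ n)).re
      = ((starRingEnd ℂ) (uSeq α ζ n) * sSeq α ζ n).re := by
    rw [show uSeq α ζ n * (starRingEnd ℂ) (sSeq α ζ n)
        = (starRingEnd ℂ) ((starRingEnd ℂ) (uSeq α ζ n) * sSeq α ζ n) from by
      simp [map_mul, Complex.conj_conj]]
    exact Complex.conj_re _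
  have hre := congrArg Complex.re e
  simp only [Complex.sub_re, Complex.add_re, Complex.re_ofReal_mul, Complex.ofReal_re,
    hucs] at hre
  have h3 := HaH hα hζ n
  linear_combination hre - (1 + ‖α n‖^2) * h3

lemma aSeq_pos' (hα : ∀ n, ‖α n‖ < 1) (hζ : ‖ζ‖ = 1) (n : ℕ) :
    0 < aSeq α ζ n := by
  have := aSeq_pos hα hζ n
  rw [aSeq]; positivity

lemma h_bounds (hα : ∀ n, ‖α n‖ < 1) (hζ : ‖ζ‖ = 1) (n : ℕ) :
    -1 ≤ hSeq α ζ n ∧ hSeq α ζ n ≤ 1 := by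
  have ha := aSeq_pos' hα hζ n
  have hH : |((starRingEnd ℂ) (uSeq α ζ n) * sSeq α ζ n).re| ≤ aSeq α ζ n := by
    calc |((starRingEnd ℂ) (uSeq α ζ n) * sSeq α ζ n).re|
        ≤ ‖(starRingEnd ℂ) (uSeq α ζ n) * sSeq α ζ n‖ :=
          Complex.abs_re_le_norm _
    _ = aSeq α ζ n := by
        rw [norm_mul, Complex.norm_conj, u_abs hζ, one_mul, abs_sSeq hζ]
  have habs := abs_le.1 hH
  constructor
  · rw [hSeq, le_div_iff₀ ha]; linarith [habs.1]
  · rw [hSeq, div_le_one ha]; linarith [habs.2]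

lemma swap_bound (hα : ∀ n, ‖α n‖ < 1) (hζ : ‖ζ‖ = 1) (n : ℕ) :
    |hSeq α ζ (n+1) * (1 + ‖α n‖^2 - 2*(‖α n‖)*(hSeq α ζ n))
        - ((1 + ‖α n‖^2) * hSeq α ζ n - 2*‖α n‖)|
      ≤ ‖uSeq α ζ (n+1) - uSeq α ζ n‖
        * (1 + ‖α n‖^2 - 2*(‖α n‖)*(hSeq α ζ n)) := by
  have ha := aSeq_pos' hα hζ n
  have ha' := aSeq_pos' hα hζ (n+1)
  have hb2 : 0 < 1 - ‖α n‖^2 := by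
    nlinarith [hα n, norm_nonneg (α n)]
  set D : ℝ := 1 + ‖α n‖^2 - 2*(‖α n‖)*(hSeq α ζ n) with hD
  set d : ℝ := ‖uSeq α ζ (n+1) - uSeq α ζ n‖ with hd
  have hHG : |((starRingEnd ℂ) (uSeq α ζ (n+1)) * sSeq α ζ (n+1)).re
      - ((starRingEnd ℂ) (uSeq α ζ n) * sSeq α ζ (n+1)).re| ≤ d * aSeq α ζ (n+1) := by
    have e1 : ((starRingEnd ℂ) (uSeq α ζ (n+1)) * sSeq α ζ (n+1)).re
        - ((starRingEnd ℂ) (uSeq α ζ n) * sSeq α ζ (n+1)).re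
        = (((starRingEnd ℂ) (uSeq α ζ (n+1)) - (starRingEnd ℂ) (uSeq α ζ n))
            * sSeq α ζ (n+1)).re := by
      rw [sub_mul, Complex.sub_re]
    rw [e1]
    calc |(((starRingEnd ℂ) (uSeq α ζ (n+1)) - (starRingEnd ℂ) (uSeq α ζ n))
            * sSeq α ζ (n+1)).re|
        ≤ ‖((starRingEnd ℂ) (uSeq α ζ (n+1)) - (starRingEnd ℂ) (uSeq α ζ n))
            * sSeq α ζ (n+1)‖ := Complex.abs_re_le_norm _
    _ = d * aSeq α ζ (n+1) := by
        rw [norm_mul, ← map_sub, abs_sSeq hζ, Complex.norm_conj, hd]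
  -- (h' D - X) * a n = (1-b²)(H' - G)
  have haE := aE hα hζ n
  have hE3 := E3 hα hζ n
  have hkey : (hSeq α ζ (n+1) * D
      - ((1 + ‖α n‖^2) * hSeq α ζ n - 2*‖α n‖)) * aSeq α ζ n
      = (1 - ‖α n‖^2) * (((starRingEnd ℂ) (uSeq α ζ (n+1)) * sSeq α ζ (n+1)).re
          - ((starRingEnd ℂ) (uSeq α ζ n) * sSeq α ζ (n+1)).re) := by
    have h1 : hSeq α ζ (n+1) * D * aSeq α ζ n
        = ((starRingEnd ℂ) (uSeq α ζ (n+1)) * sSeq α ζ (n+1)).re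
          * (1 - ‖α n‖^2) := by
      have hh' := HaH hα hζ (n+1)
      have e : hSeq α ζ (n+1) * D * aSeq α ζ n
          = hSeq α ζ (n+1) * (aSeq α ζ n * D) := by ring
      rw [e, ← haE]
      calc hSeq α ζ (n+1) * (aSeq α ζ (n+1) * (1 - ‖α n‖^2))
          = (hSeq α ζ (n+1) * aSeq α ζ (n+1)) * (1 - ‖α n‖^2) := by ring
      _ = _ := by rw [hh']
    have h2 : ((1 + ‖α n‖^2) * hSeq α ζ n - 2*‖α n‖) * aSeq α ζ n
        = ((starRingEnd ℂ) (uSeq α ζ n) * sSeq α ζ (n+1)).re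
          * (1 - ‖α n‖^2) := by
      linear_combination -hE3
    linear_combination h1 - h2
  have hfinal : |hSeq α ζ (n+1) * D
      - ((1 + ‖α n‖^2) * hSeq α ζ n - 2*‖α n‖)| * aSeq α ζ n
      ≤ (d * D) * aSeq α ζ n := by
    have e1 : |hSeq α ζ (n+1) * D
        - ((1 + ‖α n‖^2) * hSeq α ζ n - 2*‖α n‖)| * aSeq α ζ n
        = |(hSeq α ζ (n+1) * D
            - ((1 + ‖α n‖^2) * hSeq α ζ n - 2*‖α n‖))
          * aSeq α ζ n| := by
      rw [abs_mul, abs_of_pos ha]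
    rw [e1, hkey, abs_mul, abs_of_pos hb2]
    have e2 : (d * D) * aSeq α ζ n = d * (aSeq α ζ (n+1) * (1 - ‖α n‖^2)) := by
      rw [haE, hD]; ring
    rw [e2]
    calc (1 - ‖α n‖^2) * |((starRingEnd ℂ) (uSeq α ζ (n+1)) * sSeq α ζ (n+1)).re
          - ((starRingEnd ℂ) (uSeq α ζ n) * sSeq α ζ (n+1)).re|
        ≤ (1 - ‖α n‖^2) * (d * aSeq α ζ (n+1)) :=
          mul_le_mul_of_nonneg_left hHG (le_of_lt hb2)
    _ = d * (aSeq α ζ (n+1) * (1 - ‖α n‖^2)) := by ring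
  exact le_of_mul_le_mul_right hfinal ha

lemma delta_formula (hα : ∀ n, ‖α n‖ < 1) (hζ : ‖ζ‖ = 1)
    (γ : ℝ) (n : ℕ) :
    ζ^n * szegoDelta α ζ γ n
      = (sSeq α ζ n - (ζ^n * α n) * ((aSeq α ζ n : ℝ):ℂ))
        / ((((1 - γ) * γ⁻¹ + szegoK α ζ n : ℝ)) : ℂ) := by
  have hz := zeta_ne hζ
  have hw : ζ^n ≠ 0 := pow_ne_zero _ hz
  have hnum : ζ^n * (((Real.sqrt (1 - ‖α n‖ ^ 2) : ℝ) : ℂ) *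
      (starRingEnd ℂ) ((szegoPhi α ζ (n + 1)).1) * (szegoPhi α ζ n).2)
      = sSeq α ζ n - (ζ^n * α n) * ((aSeq α ζ n : ℝ):ℂ) := by
    rw [conjP_rec hα hζ n, phiStar_eq hα hζ n, a_coe, sSeq,
      show 2*n = n*2 from Nat.mul_comm 2 n, pow_mul]
    field_simp
  rw [szegoDelta, ← mul_div_assoc, hnum]

lemma K_succ (n : ℕ) : szegoK α ζ (n+1) = szegoK α ζ n + aSeq α ζ (n+1) := by
  rw [szegoK, szegoK, Finset.sum_range_succ, aSeq]

lemma K_pos (hα : ∀ n, ‖α n‖ < 1) (hζ : ‖ζ‖ = 1)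
    {γ : ℝ} (hγ0 : 0 < γ) (hγ1 : γ < 1) (n : ℕ) :
    0 < (1 - γ) * γ⁻¹ + szegoK α ζ n := by
  have h1 : 0 < (1 - γ) * γ⁻¹ := by
    apply mul_pos (by linarith) (by positivity)
  have h2 : 0 ≤ szegoK α ζ n := by
    rw [szegoK]
    apply Finset.sum_nonneg
    intro i _
    positivity
  linarith

end OPUCAux

open OPUCAux in
/-- Theorem 3: if `ζ` on the unit circle is not a pure point and `ζⁿ αₙ → L`, then
`ζⁿ Δₙ(ζ) → -2L`, and consequently `ζⁿ(αₙ + Δₙ(ζ)) → -L`. -/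
theorem rotated_delta_limit
    (α : ℕ → ℂ) (hα : ∀ n, ‖α n‖ < 1)
    (ζ : ℂ) (hζ : ‖ζ‖ = 1)
    (γ : ℝ) (hγ0 : 0 < γ) (hγ1 : γ < 1)
    (hnpp : ¬ Summable (fun j => ‖(szegoPhi α ζ j).1‖ ^ 2))
    (L : ℂ) (hlim : Tendsto (fun n => ζ ^ n * α n) atTop (nhds L)) :
    Tendsto (fun n => ζ ^ n * szegoDelta α ζ γ n) atTop (nhds (-2 * L)) ∧
    Tendsto (fun n => ζ ^ n * (α n + szegoDelta α ζ γ n)) atTop (nhds (-L)) := by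
  -- common setup
  have hb0 : ∀ n, (0:ℝ) ≤ ‖α n‖ := fun n => norm_nonneg _
  have habsβ : ∀ n, ‖ζ^n * α n‖ = ‖α n‖ := by
    intro n; rw [norm_mul, norm_pow, hζ, one_pow, one_mul]
  have hb : Tendsto (fun n => ‖α n‖) atTop (nhds (‖L‖)) :=
    Tendsto.congr (fun n => habsβ n) ((continuous_norm.tendsto L).comp hlim)
  have hDpos : ∀ n, (0:ℝ) < 1 + ‖α n‖^2
      - 2*(‖α n‖)*(hSeq α ζ n) := by
    intro n
    nlinarith [hb0 n, hα n, (h_bounds hα hζ n).1, (h_bounds hα hζ n).2]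
  have hb2pos : ∀ n, (0:ℝ) < 1 - ‖α n‖^2 := by
    intro n; nlinarith [hb0 n, hα n]
  -- q and y
  set q : ℕ → ℝ := fun n => aSeq α ζ n / aSeq α ζ (n+1) with hqdef
  set y : ℕ → ℝ := fun n => ((1 - γ) * γ⁻¹ + szegoK α ζ n) / aSeq α ζ n with hydef
  have hq_eq : ∀ n, q n = (1 - ‖α n‖^2)
      / (1 + ‖α n‖^2 - 2*(‖α n‖)*(hSeq α ζ n)) := by
    intro n
    have h1 := aE hα hζ n
    have h2 := aSeq_pos' hα hζ n
    have h3 := aSeq_pos' hα hζ (n+1)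
    rw [hqdef]
    simp only
    rw [div_eq_div_iff h3.ne' (hDpos n).ne']
    linear_combination -h1
  have hq0 : ∀ n, 0 ≤ q n := by
    intro n
    have h2 := aSeq_pos' hα hζ n
    have h3 := aSeq_pos' hα hζ (n+1)
    rw [hqdef]; positivity
  have hy_rec : ∀ n, y (n+1) = q n * y n + 1 := by
    intro n
    have h2 := (aSeq_pos' hα hζ n).ne'
    have h3 := (aSeq_pos' hα hζ (n+1)).ne'
    rw [hydef, hqdef]
    simp only
    rw [K_succ]
    field_simp
    ring
  have hy0 : ∀ n, 0 ≤ y n := by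
    intro n
    exact le_of_lt (div_pos (K_pos hα hζ hγ0 hγ1 n) (aSeq_pos' hα hζ n))
  have hyinv : ∀ n, (y n)⁻¹ = aSeq α ζ n / ((1 - γ) * γ⁻¹ + szegoK α ζ n) := by
    intro n
    rw [hydef]
    simp only
    rw [inv_div]
  -- main split
  have main : Tendsto (fun n => ζ ^ n * szegoDelta α ζ γ n) atTop (nhds (-2 * L)) := by
    by_cases hL : L = 0
    · -- case L = 0
      subst hL
      have hqone : Tendsto q atTop (nhds 1) := by
        have hDlim : Tendsto (fun n => 1 + ‖α n‖^2
            - 2*(‖α n‖)*(hSeq α ζ n)) atTop (nhds 1) := by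
          have hb' : Tendsto (fun n => ‖α n‖) atTop (nhds 0) := by
            simpa using hb
          have h1 : Tendsto (fun n => ‖α n‖^2) atTop (nhds 0) := by
            simpa using hb'.pow 2
          have h2 : Tendsto (fun n => 2*(‖α n‖)*(hSeq α ζ n)) atTop (nhds 0) := by
            refine squeeze_zero_norm ?_ (by simpa using hb'.const_mul 2)
            · intro n
              rw [Real.norm_eq_abs, abs_mul]
              have e1 : |2 * ‖α n‖| = 2 * ‖α n‖ := by
                rw [abs_of_nonneg]; positivity
              rw [e1]
              have := abs_le.2 ⟨(h_bounds hα hζ n).1, (h_bounds hα hζ n).2⟩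
              nlinarith [hb0 n, abs_nonneg (hSeq α ζ n)]
          have h3 := ((tendsto_const_nhds (x := (1:ℝ))).add h1).sub h2
          simpa using h3
        have := ((tendsto_const_nhds (x := (1:ℝ))).sub
          (by simpa using (hb.pow 2) : Tendsto (fun n => ‖α n‖^2) atTop
            (nhds 0))).div hDlim one_ne_zero
        simp only [sub_zero, div_one] at this
        apply Tendsto.congr (fun n => (hq_eq n).symm)
        exact this
      have hyT : Tendsto y atTop atTop := lemAtTop hy0 hy_rec hqone
      have hyinv0 : Tendsto (fun n => (y n)⁻¹) atTop (nhds 0) :=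
        hyT.inv_tendsto_atTop
      rw [show (-2 : ℂ) * 0 = 0 by ring]
      rw [tendsto_zero_iff_norm_tendsto_zero]
      refine squeeze_zero_norm ?_ (by simpa using hyinv0.const_mul 2)
      · intro n
        rw [norm_norm]
        rw [delta_formula hα hζ γ n]
        rw [norm_div]
        have hK := K_pos hα hζ hγ0 hγ1 n
        have hKnorm : ‖(((1 - γ) * γ⁻¹ + szegoK α ζ n : ℝ) : ℂ)‖
            = (1 - γ) * γ⁻¹ + szegoK α ζ n := by
          rw [Complex.norm_real, Real.norm_eq_abs, abs_of_pos hK]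
        rw [hKnorm]
        have hnum : ‖sSeq α ζ n - (ζ^n * α n) * ((aSeq α ζ n : ℝ):ℂ)‖
            ≤ 2 * aSeq α ζ n := by
          calc ‖sSeq α ζ n - (ζ^n * α n) * ((aSeq α ζ n : ℝ):ℂ)‖
              ≤ ‖sSeq α ζ n‖ + ‖(ζ^n * α n) * ((aSeq α ζ n : ℝ):ℂ)‖ := norm_sub_le _ _
          _ ≤ 2 * aSeq α ζ n := by
              rw [abs_sSeq hζ, norm_mul, habsβ,
                Complex.norm_real, Real.norm_eq_abs,
                abs_of_pos (aSeq_pos' hα hζ n)]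
              nlinarith [aSeq_pos' hα hζ n, hα n, hb0 n]
        rw [hyinv n]
        calc ‖sSeq α ζ n - (ζ^n * α n) * ((aSeq α ζ n : ℝ):ℂ)‖
              / ((1 - γ) * γ⁻¹ + szegoK α ζ n)
            ≤ (2 * aSeq α ζ n) / ((1 - γ) * γ⁻¹ + szegoK α ζ n) :=
              (div_le_div_iff_of_pos_right hK).2 hnum
        _ = 2 * (aSeq α ζ n / ((1 - γ) * γ⁻¹ + szegoK α ζ n)) := by ring
    · -- case L ≠ 0
      set ℓ : ℝ := ‖L‖ with hℓdef
      have hℓ0 : 0 < ℓ := norm_pos_iff.mpr hL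
      have hℓ1 : ℓ ≤ 1 := le_of_tendsto hb (Eventually.of_forall fun n => (hα n).le)
      have hβne : ∀ᶠ n in atTop, α n ≠ 0 := by
        obtain ⟨N, hN⟩ := (Metric.tendsto_atTop.1 hb) (ℓ/2) (by linarith)
        rw [eventually_atTop]
        refine ⟨N, fun n hn hc => ?_⟩
        have := hN n hn
        rw [Real.dist_eq, hc] at this
        simp only [norm_zero, zero_sub, abs_neg, abs_of_pos hℓ0] at this
        linarith
      have hℓc : ((ℓ:ℝ):ℂ) ≠ 0 := Complex.ofReal_ne_zero.2 hℓ0.ne'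
      have hu : Tendsto (uSeq α ζ) atTop (nhds (L / ((ℓ:ℝ):ℂ))) := by
        have h1 : Tendsto (fun n => (ζ^n * α n) / ((‖α n‖ :ℝ):ℂ)) atTop
            (nhds (L / ((ℓ:ℝ):ℂ))) :=
          Tendsto.div hlim ((Complex.continuous_ofReal.tendsto ℓ).comp hb) hℓc
        apply Tendsto.congr' _ h1
        filter_upwards [hβne] with n hn
        rw [uSeq, if_neg hn]
      have hd : Tendsto (fun n => ‖uSeq α ζ (n+1) - uSeq α ζ n‖) atTop
          (nhds 0) := by
        have h2 := (hu.comp (tendsto_add_atTop_nat 1)).sub hu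
        rw [sub_self] at h2
        have h3 := (continuous_norm.tendsto 0).comp h2
        simpa [Function.comp_def] using h3
      have hhten : Tendsto (hSeq α ζ) atTop (nhds (-1)) :=
        dynamics hℓ0 hb hb0 (fun n => hα n) (h_bounds hα hζ)
          (aSeq_pos' hα hζ) (aE hα hζ) (swap_bound hα hζ) hd hnpp
      -- q limit
      have hDlim : Tendsto (fun n => 1 + ‖α n‖^2
          - 2*‖α n‖*hSeq α ζ n) atTop (nhds ((1+ℓ)^2)) := by
        have h1 := (tendsto_const_nhds (x := (1:ℝ))).add (hb.pow 2)
        have h2 := (hb.const_mul 2).mul hhten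
        have h3 := h1.sub h2
        have e : (1:ℝ) + ℓ^2 - 2*ℓ*(-1) = (1+ℓ)^2 := by ring
        rw [← e]
        exact h3
      have hQ : Tendsto q atTop (nhds ((1 - ℓ)/(1 + ℓ))) := by
        have h4 := ((tendsto_const_nhds (x := (1:ℝ))).sub (hb.pow 2)).div hDlim
          (by positivity)
        have e2 : ((1:ℝ) - ℓ^2)/((1+ℓ)^2) = (1-ℓ)/(1+ℓ) := by
          rw [div_eq_div_iff (by positivity) (by linarith)]; ring
        rw [e2] at h4
        exact Tendsto.congr (fun n => (hq_eq n).symm) h4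
      have hQ0 : (0:ℝ) ≤ (1-ℓ)/(1+ℓ) := div_nonneg (by linarith) (by linarith)
      have hQ1 : (1-ℓ)/(1+ℓ) < 1 := by rw [div_lt_one (by linarith)]; linarith
      have hyT := lemAffine hQ0 hQ1 hq0 hy_rec hQ
      have h1mQ : (1:ℝ) - (1-ℓ)/(1+ℓ) = 2*ℓ/(1+ℓ) := by
        field_simp
        ring
      have hyne : (1:ℝ)/(1 - (1-ℓ)/(1+ℓ)) ≠ 0 := by
        rw [h1mQ]; positivity
      have hyinvT : Tendsto (fun n => (y n)⁻¹) atTop (nhds (2*ℓ/(1+ℓ))) := by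
        have h5 := hyT.inv₀ hyne
        have e : ((1:ℝ)/(1 - (1-ℓ)/(1+ℓ)))⁻¹ = 2*ℓ/(1+ℓ) := by
          rw [one_div, inv_inv, h1mQ]
        rwa [e] at h5
      -- z + u → 0
      set z : ℕ → ℂ := fun n => sSeq α ζ n / ((aSeq α ζ n : ℝ):ℂ) with hzdef
      have hnormsq : ∀ n, ‖z n + uSeq α ζ n‖^2 = 2 + 2*hSeq α ζ n := by
        intro n
        have ha := aSeq_pos' hα hζ n
        rw [show ‖z n + uSeq α ζ n‖ = ‖z n + uSeq α ζ n‖ from rfl,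
          Complex.sq_norm, Complex.normSq_add]
        have e1 : Complex.normSq (z n) = 1 := by
          rw [← Complex.sq_norm, hzdef]
          simp only
          rw [norm_div, abs_sSeq hζ, Complex.norm_real, Real.norm_eq_abs, abs_of_pos ha, div_self ha.ne']
          norm_num
        have e2 : Complex.normSq (uSeq α ζ n) = 1 := by
          rw [← Complex.sq_norm, u_abs hζ]; norm_num
        have e3 : (z n * (starRingEnd ℂ) (uSeq α ζ n)).re = hSeq α ζ n := by
          rw [hzdef]
          simp only
          rw [div_mul_eq_mul_div, mul_comm, Complex.div_ofReal_re, hSeq]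
        rw [e1, e2, e3]
        ring
      have hzu : Tendsto (fun n => z n + uSeq α ζ n) atTop (nhds 0) := by
        rw [tendsto_zero_iff_norm_tendsto_zero]
        have h6 : Tendsto (fun n => 2 + 2 * hSeq α ζ n) atTop (nhds 0) := by
          have := (tendsto_const_nhds (x := (2:ℝ))).add (hhten.const_mul 2)
          norm_num at this
          exact this
        have h7 : ∀ n, ‖z n + uSeq α ζ n‖ = Real.sqrt (2 + 2*hSeq α ζ n) := by
          intro n
          rw [← hnormsq n, Real.sqrt_sq (norm_nonneg _)]
        have h8 := (Real.continuous_sqrt.tendsto 0).comp h6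
        rw [show Real.sqrt 0 = 0 from Real.sqrt_zero] at h8
        exact Tendsto.congr (fun n => (h7 n).symm) h8
      have hzmb : Tendsto (fun n => z n - ζ^n * α n) atTop
          (nhds (-(L / ((ℓ:ℝ):ℂ)) - L)) := by
        have h5 := (hzu.sub hu).sub hlim
        rw [zero_sub] at h5
        apply Tendsto.congr _ h5
        intro n; ring
      have hfinal : Tendsto (fun n => (z n - ζ^n*α n) * (((y n)⁻¹ : ℝ):ℂ)) atTop
          (nhds ((-(L / ((ℓ:ℝ):ℂ)) - L) * ((2*ℓ/(1+ℓ) : ℝ):ℂ))) :=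
        hzmb.mul ((Complex.continuous_ofReal.tendsto _).comp hyinvT)
      have heq : ∀ n, ζ^n * szegoDelta α ζ γ n = (z n - ζ^n*α n) * (((y n)⁻¹ : ℝ):ℂ) := by
        intro n
        rw [delta_formula hα hζ γ n, hyinv n, hzdef]
        have ha := (aSeq_pos' hα hζ n).ne'
        have hK := (K_pos hα hζ hγ0 hγ1 n).ne'
        have hac : ((aSeq α ζ n : ℝ):ℂ) ≠ 0 := Complex.ofReal_ne_zero.2 ha
        have hKc : (((1 - γ) * γ⁻¹ + szegoK α ζ n : ℝ):ℂ) ≠ 0 := Complex.ofReal_ne_zero.2 hK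
        push_cast
        field_simp
      have hlimeq : (-(L / ((ℓ:ℝ):ℂ)) - L) * ((2*ℓ/(1+ℓ) : ℝ):ℂ) = -2*L := by
        have h1 : (1 + ((ℓ:ℝ):ℂ)) ≠ 0 := by
          have : ((1+ℓ:ℝ):ℂ) ≠ 0 := Complex.ofReal_ne_zero.2 (by positivity)
          push_cast at this
          exact this
        have e0 : ((2*ℓ/(1+ℓ) : ℝ):ℂ) = 2*((ℓ:ℝ):ℂ)/(1+((ℓ:ℝ):ℂ)) := by push_cast; ring
        rw [e0]
        field_simp
        ring
      rw [← hlimeq]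
      exact Tendsto.congr (fun n => (heq n).symm) hfinal
  refine ⟨main, ?_⟩
  have := hlim.add main
  have e : ∀ n, ζ^n * α n + ζ^n * szegoDelta α ζ γ n = ζ^n * (α n + szegoDelta α ζ γ n) := by
    intro n; ring
  rw [show -L = L + (-2*L) by ring]
  exact Tendsto.congr e this
end

section
/- Let (f_{1,n}), (f_{2,n}) be complex sequences, (δ_n) a summable sequence of nonnegative reals, and (c_n) complex numbers with c_n → c where |c| < 1, such that for all n: |f_{1,n+1} − f_{1,n}| ≤ δ_n(|f_{1,n}| + |f_{2,n}|) and |f_{2,n+1} − c_n f_{2,n}| ≤ δ_n(|f_{1,n}| + |f_{2,n}|). Then sup_n (|f_{1,n}| + |f_{2,n}|) < ∞ and f_{2,n} → 0 as n → ∞. -/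
open Filter

/-- Lemma 1, part (1): under the perturbed diagonal recursion bounds with summable errors and
contraction ratio tending to `c` with `|c| < 1`, the sequence `|f₁ₙ| + |f₂ₙ|` is bounded and
`f₂ₙ → 0`. -/
theorem f_bounded_and_f2_tendsto_zero
    (f₁ f₂ : ℕ → ℂ) (δ : ℕ → ℝ) (hδ0 : ∀ n, 0 ≤ δ n) (hδ : Summable δ)
    (c : ℕ → ℂ) (climit : ℂ) (hc : Tendsto c atTop (nhds climit))
    (hclim : ‖climit‖ < 1)
    (h1 : ∀ n, ‖f₁ (n + 1) - f₁ n‖ ≤ δ n * (‖f₁ n‖ + ‖f₂ n‖))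
    (h2 : ∀ n, ‖f₂ (n + 1) - c n * f₂ n‖ ≤
      δ n * (‖f₁ n‖ + ‖f₂ n‖)) :
    (∃ M : ℝ, ∀ n, ‖f₁ n‖ + ‖f₂ n‖ ≤ M) ∧
    Tendsto f₂ atTop (nhds 0) := by
  set S : ℕ → ℝ := fun n => ‖f₁ n‖ + ‖f₂ n‖ with hSdef
  have hS0 : ∀ n, 0 ≤ S n := fun n => add_nonneg (norm_nonneg _) (norm_nonneg _)
  set ρ : ℝ := (‖climit‖ + 1) / 2 with hρdef
  have hcl0 : (0:ℝ) ≤ ‖climit‖ := norm_nonneg _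
  have hρ1 : ρ < 1 := by rw [hρdef]; linarith
  have hρ0 : 0 ≤ ρ := by rw [hρdef]; linarith
  have hcρev : ∀ᶠ n in atTop, ‖c n‖ < ρ := by
    have hn : Tendsto (fun n => ‖c n‖) atTop (nhds ‖climit‖) := hc.norm
    exact hn.eventually_lt_const (by rw [hρdef]; linarith)
  obtain ⟨N, hN⟩ := eventually_atTop.mp hcρev
  -- basic step inequalities
  have hf1 : ∀ n, ‖f₁ (n + 1)‖ ≤ ‖f₁ n‖ + δ n * S n := by
    intro n
    have := norm_sub_norm_le (f₁ (n + 1)) (f₁ n)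
    have h := h1 n
    simp only [hSdef]
    linarith
  have hf2 : ∀ n, ‖f₂ (n + 1)‖ ≤ ‖c n‖ * ‖f₂ n‖ + δ n * S n := by
    intro n
    have ht := norm_sub_norm_le (f₂ (n + 1)) (c n * f₂ n)
    have h := h2 n
    rw [norm_mul] at ht
    simp only [hSdef]
    linarith
  -- for n ≥ N, S grows by at most exp (2 δ n)
  have hstep : ∀ n, N ≤ n → S (n + 1) ≤ Real.exp (2 * δ n) * S n := by
    intro n hn
    have hcn : ‖c n‖ ≤ 1 := le_of_lt (lt_of_lt_of_le (hN n hn) hρ1.le)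
    have h2n : ‖c n‖ * ‖f₂ n‖ ≤ ‖f₂ n‖ := by
      have := mul_le_of_le_one_left (norm_nonneg (f₂ n)) hcn
      linarith
    have hS1 : S (n + 1) ≤ (1 + 2 * δ n) * S n := by
      have a := hf1 n
      have b := hf2 n
      have hSn : S n = ‖f₁ n‖ + ‖f₂ n‖ := rfl
      have hS1' : S (n + 1) = ‖f₁ (n + 1)‖ + ‖f₂ (n + 1)‖ := rfl
      rw [hS1', hSn]
      rw [hSn] at a b
      nlinarith [norm_nonneg (f₁ n), norm_nonneg (f₂ n)]
    have hexp : (1 + 2 * δ n) ≤ Real.exp (2 * δ n) := by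
      have := Real.add_one_le_exp (2 * δ n)
      linarith
    calc S (n + 1) ≤ (1 + 2 * δ n) * S n := hS1
      _ ≤ Real.exp (2 * δ n) * S n := mul_le_mul_of_nonneg_right hexp (hS0 n)
  -- inductive growth bound
  have key : ∀ k, S (N + k) ≤ S N * Real.exp (2 * ∑ j ∈ Finset.range k, δ (N + j)) := by
    intro k
    induction k with
    | zero => simp
    | succ k ih =>
      have h1' : S (N + k + 1) ≤ Real.exp (2 * δ (N + k)) * S (N + k) :=
        hstep (N + k) (Nat.le_add_right N k)
      have : S (N + (k + 1)) = S (N + k + 1) := by rw [Nat.add_succ]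
      rw [this, Finset.sum_range_succ, mul_add, Real.exp_add]
      calc S (N + k + 1) ≤ Real.exp (2 * δ (N + k)) * S (N + k) := h1'
        _ ≤ Real.exp (2 * δ (N + k)) *
            (S N * Real.exp (2 * ∑ j ∈ Finset.range k, δ (N + j))) :=
          mul_le_mul_of_nonneg_left ih (Real.exp_pos _).le
        _ = S N * (Real.exp (2 * ∑ j ∈ Finset.range k, δ (N + j)) *
            Real.exp (2 * δ (N + k))) := by ring
  have hsum : ∀ k, ∑ j ∈ Finset.range k, δ (N + j) ≤ ∑' n, δ n := by
    intro k
    have h := Summable.sum_le_tsum (Finset.Ico N (N + k)) (fun i _ => hδ0 i) hδ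
    rw [Finset.sum_Ico_eq_sum_range] at h
    simpa using h
  have hbig : ∀ k, S (N + k) ≤ S N * Real.exp (2 * ∑' n, δ n) := by
    intro k
    refine le_trans (key k) ?_
    exact mul_le_mul_of_nonneg_left
      (Real.exp_le_exp.mpr (by linarith [hsum k])) (hS0 N)
  set M : ℝ := (∑ m ∈ Finset.range N, S m) + S N * Real.exp (2 * ∑' n, δ n) with hMdef
  have hsum0 : 0 ≤ ∑ m ∈ Finset.range N, S m :=
    Finset.sum_nonneg fun i _ => hS0 i
  have htail0 : 0 ≤ S N * Real.exp (2 * ∑' n, δ n) :=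
    mul_nonneg (hS0 N) (Real.exp_pos _).le
  have hM : ∀ n, S n ≤ M := by
    intro n
    rcases le_or_gt N n with h | h
    · have : S n = S (N + (n - N)) := by rw [Nat.add_sub_cancel' h]
      rw [this, hMdef]
      linarith [hbig (n - N)]
    · have : S n ≤ ∑ m ∈ Finset.range N, S m :=
        Finset.single_le_sum (fun i _ => hS0 i) (Finset.mem_range.mpr h)
      rw [hMdef]; linarith
  have hM0 : 0 ≤ M := le_trans (hS0 0) (hM 0)
  refine ⟨⟨M, hM⟩, ?_⟩
  -- part 2 : f₂ → 0
  rw [tendsto_zero_iff_norm_tendsto_zero]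
  rw [Metric.tendsto_atTop]
  intro ε hε
  have hδ0' : Tendsto δ atTop (nhds 0) := hδ.tendsto_atTop_zero
  have hbound_pos : 0 < ε / 2 * (1 - ρ) / (M + 1) :=
    div_pos (mul_pos (half_pos hε) (by linarith)) (by linarith)
  obtain ⟨N₂', hN₂'⟩ := eventually_atTop.mp (hδ0'.eventually_lt_const hbound_pos)
  set N₂ := max N N₂' with hN₂def
  have hδsmall : ∀ n, N₂ ≤ n → δ n * M ≤ ε / 2 * (1 - ρ) := by
    intro n hn
    have h := hN₂' n (le_trans (le_max_right _ _) hn)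
    have hMlt : M < M + 1 := by linarith
    have := mul_le_mul_of_nonneg_right (le_of_lt h) hM0
    calc δ n * M ≤ ε / 2 * (1 - ρ) / (M + 1) * M := this
      _ ≤ ε / 2 * (1 - ρ) := by
        rw [div_mul_eq_mul_div, div_le_iff₀ (by linarith : (0:ℝ) < M + 1)]
        nlinarith [hε, hρ1]
  have claim : ∀ k, ‖f₂ (N₂ + k)‖ ≤ ρ ^ k * M + ε / 2 := by
    intro k
    induction k with
    | zero =>
      simp only [Nat.add_zero, pow_zero, one_mul]
      have : ‖f₂ N₂‖ ≤ S N₂ := by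
        simp only [hSdef]; linarith [norm_nonneg (f₁ N₂)]
      linarith [hM N₂]
    | succ k ih =>
      have hn : N ≤ N₂ + k := le_trans (le_max_left _ _) (Nat.le_add_right _ _)
      have hcn : ‖c (N₂ + k)‖ ≤ ρ := le_of_lt (hN _ hn)
      have hmul : ‖c (N₂ + k)‖ * ‖f₂ (N₂ + k)‖ ≤ ρ * (ρ ^ k * M + ε / 2) :=
        mul_le_mul hcn ih (norm_nonneg _) hρ0
      have hδS : δ (N₂ + k) * S (N₂ + k) ≤ ε / 2 * (1 - ρ) := by
        have h1' := mul_le_mul_of_nonneg_left (hM (N₂ + k)) (hδ0 (N₂ + k))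
        exact le_trans h1' (hδsmall (N₂ + k) (Nat.le_add_right _ _))
      have hf := hf2 (N₂ + k)
      have : S (N₂ + (k + 1)) = S (N₂ + k + 1) := by rw [Nat.add_succ]
      have heq : N₂ + (k + 1) = N₂ + k + 1 := by omega
      rw [heq]
      calc ‖f₂ (N₂ + k + 1)‖ ≤ ‖c (N₂ + k)‖ * ‖f₂ (N₂ + k)‖ + δ (N₂ + k) * S (N₂ + k) := hf
        _ ≤ ρ * (ρ ^ k * M + ε / 2) + ε / 2 * (1 - ρ) := by linarith
        _ = ρ ^ (k + 1) * M + ε / 2 := by ring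
  -- choose k large so that ρ ^ k * M < ε / 2
  have hpow : Tendsto (fun k => ρ ^ k * M) atTop (nhds 0) := by
    have := (tendsto_pow_atTop_nhds_zero_of_lt_one hρ0 hρ1).mul_const M
    simpa using this
  obtain ⟨K, hK⟩ := eventually_atTop.mp (hpow.eventually_lt_const (by linarith : (0:ℝ) < ε / 2))
  refine ⟨N₂ + K, fun n hn => ?_⟩
  have h1' : ‖f₂ n‖ ≤ ρ ^ (n - N₂) * M + ε / 2 := by
    have h := claim (n - N₂)
    rwa [show N₂ + (n - N₂) = n by omega] at h
  have h2' : ρ ^ (n - N₂) * M < ε / 2 := hK (n - N₂) (by omega)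
  rw [Real.dist_eq, sub_zero, abs_of_nonneg (norm_nonneg _)]
  linarith
end

section
/- Let (f_{1,n}), (f_{2,n}) be complex sequences, (δ_n) a summable sequence of nonnegative reals, and (c_n) complex numbers with c_n → c where |c| < 1, such that for all n: |f_{1,n+1} − f_{1,n}| ≤ δ_n(|f_{1,n}| + |f_{2,n}|) and |f_{2,n+1} − c_n f_{2,n}| ≤ δ_n(|f_{1,n}| + |f_{2,n}|). Suppose further there exist a constant C > 0 and an index K such that |f_{1,n}| ≤ C|f_{2,n}| for all n ≥ K. Then for every ε > 0 there exist an integer N_ε and a constant C_ε such that |f_{2,n}| ≤ C_ε(|c| + ε)ⁿ for all n ≥ N_ε; in particular both f_{1,n} and f_{2,n} decay exponentially fast. -/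
open Filter

/-- Lemma 1, case (2a): if in addition `|f₁ₙ| ≤ C|f₂ₙ|` eventually, then both `f₂ₙ` and `f₁ₙ`
decay exponentially: for every `ε > 0`, `|f₂ₙ|, |f₁ₙ| ≤ C_ε (|c| + ε)ⁿ` for large `n`. -/
theorem f_exponential_decay_of_comparable
    (f₁ f₂ : ℕ → ℂ) (δ : ℕ → ℝ) (hδ0 : ∀ n, 0 ≤ δ n) (hδ : Summable δ)
    (c : ℕ → ℂ) (climit : ℂ) (hc : Tendsto c atTop (nhds climit))
    (hclim : ‖climit‖ < 1)
    (h1 : ∀ n, ‖f₁ (n + 1) - f₁ n‖ ≤ δ n * (‖f₁ n‖ + ‖f₂ n‖))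
    (h2 : ∀ n, ‖f₂ (n + 1) - c n * f₂ n‖ ≤
      δ n * (‖f₁ n‖ + ‖f₂ n‖))
    (C : ℝ) (hC : 0 < C) (K : ℕ)
    (hcomp : ∀ n ≥ K, ‖f₁ n‖ ≤ C * ‖f₂ n‖) :
    ∀ ε > (0 : ℝ), ∃ Nε : ℕ, ∃ Cε > (0 : ℝ), ∀ n ≥ Nε,
      ‖f₂ n‖ ≤ Cε * (‖climit‖ + ε) ^ n ∧
      ‖f₁ n‖ ≤ Cε * (‖climit‖ + ε) ^ n := by
  intro ε hε
  set r : ℝ := ‖climit‖ + ε with hr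
  have hr0 : 0 < r := by positivity
  -- eventually |c n| ≤ |climit| + ε/2
  have hcabs : Tendsto (fun n => ‖c n‖) atTop (nhds (‖climit‖)) :=
    (continuous_norm.tendsto climit).comp hc
  have hev1 : ∀ᶠ n in atTop, ‖c n‖ < ‖climit‖ + ε / 2 := by
    have := hcabs.eventually (eventually_lt_nhds (by linarith : ‖climit‖ < ‖climit‖ + ε / 2))
    exact this
  have hδ0' : Tendsto δ atTop (nhds 0) := hδ.tendsto_atTop_zero
  have hev2 : ∀ᶠ n in atTop, (1 + C) * δ n < ε / 2 := by
    have h := hδ0'.eventually (eventually_lt_nhds (show (0:ℝ) < ε / 2 / (1 + C) by positivity))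
    filter_upwards [h] with n hn
    calc (1 + C) * δ n < (1 + C) * (ε / 2 / (1 + C)) := by
          apply mul_lt_mul_of_pos_left hn (by linarith)
      _ = ε / 2 := by field_simp
  obtain ⟨N₀, hN₀⟩ := ((hev1.and hev2).and (eventually_ge_atTop K)).exists_forall_of_atTop
  set N := N₀
  -- key step: for n ≥ N, |f₂ (n+1)| ≤ r * |f₂ n|
  have key : ∀ n ≥ N, ‖f₂ (n + 1)‖ ≤ r * ‖f₂ n‖ := by
    intro n hn
    obtain ⟨⟨hcn, hdn⟩, hK⟩ := hN₀ n hn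
    have h2n := h2 n
    have hcomp' := hcomp n hK
    have habs : ‖f₂ (n + 1)‖ ≤
        ‖f₂ (n + 1) - c n * f₂ n‖ + ‖c n * f₂ n‖ := by
      calc ‖f₂ (n + 1)‖ = ‖(f₂ (n+1) - c n * f₂ n) + c n * f₂ n‖ := by
            ring_nf
        _ ≤ _ := norm_add_le _ _
    have hb2 : (0:ℝ) ≤ ‖f₂ n‖ := norm_nonneg _
    calc ‖f₂ (n + 1)‖
        ≤ δ n * (‖f₁ n‖ + ‖f₂ n‖) + ‖c n‖ * ‖f₂ n‖ := by
          rw [norm_mul] at habs; linarith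
      _ ≤ δ n * (C * ‖f₂ n‖ + ‖f₂ n‖) + ‖c n‖ * ‖f₂ n‖ := by
          have := hδ0 n; nlinarith
      _ = (‖c n‖ + (1 + C) * δ n) * ‖f₂ n‖ := by ring
      _ ≤ r * ‖f₂ n‖ := by
          apply mul_le_mul_of_nonneg_right _ hb2
          rw [hr]; linarith
  -- induction: |f₂ n| ≤ |f₂ N| * r^(n-N)
  have hind : ∀ n ≥ N, ‖f₂ n‖ ≤ ‖f₂ N‖ * r ^ (n - N) := by
    intro n hn
    induction n, hn using Nat.le_induction with
    | base => simp
    | succ n hn ih =>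
        have : ‖f₂ (n + 1)‖ ≤ r * (‖f₂ N‖ * r ^ (n - N)) :=
          (key n hn).trans (by apply mul_le_mul_of_nonneg_left ih hr0.le)
        calc ‖f₂ (n+1)‖ ≤ r * (‖f₂ N‖ * r ^ (n - N)) := this
          _ = ‖f₂ N‖ * r ^ (n - N + 1) := by ring
          _ = ‖f₂ N‖ * r ^ (n + 1 - N) := by
              rw [Nat.sub_add_comm hn]
  refine ⟨N, (max C 1) * (‖f₂ N‖ / r ^ N + 1), by positivity, ?_⟩
  intro n hn
  have hCmax : (1:ℝ) ≤ max C 1 := le_max_right _ _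
  have hf2 : ‖f₂ n‖ ≤ (‖f₂ N‖ / r ^ N + 1) * r ^ n := by
    have h := hind n hn
    have hpow : r ^ (n - N) = r ^ n / r ^ N := by
      rw [eq_div_iff (by positivity), ← pow_add, Nat.sub_add_cancel hn]
    calc ‖f₂ n‖ ≤ ‖f₂ N‖ * (r ^ n / r ^ N) := by rw [← hpow]; exact h
      _ = (‖f₂ N‖ / r ^ N) * r ^ n := by ring
      _ ≤ (‖f₂ N‖ / r ^ N + 1) * r ^ n := by
          apply mul_le_mul_of_nonneg_right (by linarith) (by positivity)
  have hpos : (0:ℝ) ≤ ‖f₂ N‖ / r ^ N + 1 := by positivity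
  have hrn : (0:ℝ) ≤ r ^ n := by positivity
  constructor
  · calc ‖f₂ n‖ ≤ (‖f₂ N‖ / r ^ N + 1) * r ^ n := hf2
      _ ≤ (max C 1) * (‖f₂ N‖ / r ^ N + 1) * r ^ n := by
          have h' := mul_le_mul_of_nonneg_right (le_mul_of_one_le_left hpos hCmax) hrn
          linarith
  · have hK : K ≤ n := (hN₀ n hn).2
    have hcomp' := hcomp n hK
    calc ‖f₁ n‖ ≤ C * ‖f₂ n‖ := hcomp'
      _ ≤ C * ((‖f₂ N‖ / r ^ N + 1) * r ^ n) :=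
          mul_le_mul_of_nonneg_left hf2 hC.le
      _ ≤ (max C 1) * (‖f₂ N‖ / r ^ N + 1) * r ^ n := by
          have h' := mul_le_mul_of_nonneg_right
            (mul_le_mul_of_nonneg_right (le_max_left C 1) hpos) hrn
          nlinarith
end

section
/- Let (f_{1,n}), (f_{2,n}) be complex sequences, (δ_n) a summable sequence of nonnegative reals, and (c_n) complex numbers with c_n → c where |c| < 1, such that for all n: |f_{1,n+1} − f_{1,n}| ≤ δ_n(|f_{1,n}| + |f_{2,n}|) and |f_{2,n+1} − c_n f_{2,n}| ≤ δ_n(|f_{1,n}| + |f_{2,n}|). Suppose further that for every constant M > 0 and every index K there exists n ≥ K with |f_{1,n}| > M|f_{2,n}|. Then f_{1,n} ≠ 0 for all sufficiently large n, the ratio f_{2,n}/f_{1,n} → 0, and the limit f_1 = lim_{n→∞} f_{1,n} exists and is nonzero. -/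
open Filter

private lemma exp_neg_le_aux (d : ℝ) (h0 : 0 ≤ d) (h1 : d ≤ 1/4) :
    Real.exp (-(4 * d)) ≤ 1 - 2 * d := by
  have h4 : 1 + 4 * d ≤ Real.exp (4 * d) := by
    have := Real.add_one_le_exp (4 * d); linarith
  have hpos : (0:ℝ) < 1 + 4 * d := by linarith
  have hpos2 : (0:ℝ) < Real.exp (4 * d) := Real.exp_pos _
  rw [Real.exp_neg]
  have h5 : (Real.exp (4 * d))⁻¹ ≤ (1 + 4 * d)⁻¹ := by
    apply inv_anti₀ hpos h4
  refine h5.trans ?_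
  rw [inv_le_iff_one_le_mul₀ hpos]
  nlinarith

private lemma summable_of_linear_rec (u b : ℕ → ℝ) (r : ℝ) (hr0 : 0 ≤ r) (hr1 : r < 1)
    (hu : ∀ n, 0 ≤ u n) (hb0 : ∀ n, 0 ≤ b n) (hb : Summable b)
    (hrec : ∀ n, u (n + 1) ≤ r * u n + b n) : Summable u := by
  set B := ∑' n, b n with hB
  have hB0 : 0 ≤ B := tsum_nonneg hb0
  have hden : 0 < 1 - r := by linarith
  apply summable_of_sum_range_le (c := (u 0 + B) / (1 - r)) hu
  intro n
  match n with
  | 0 => simpa using div_nonneg (by linarith [hu 0]) hden.le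
  | (m+1) =>
    have hsum : ∑ i ∈ Finset.range (m+1), u i
        = (∑ i ∈ Finset.range m, u (i+1)) + u 0 := Finset.sum_range_succ' u m
    have h1 : ∑ i ∈ Finset.range m, u (i+1) ≤ ∑ i ∈ Finset.range m, (r * u i + b i) :=
      Finset.sum_le_sum (fun i _ => hrec i)
    have h2 : ∑ i ∈ Finset.range m, (r * u i + b i)
        = r * (∑ i ∈ Finset.range m, u i) + ∑ i ∈ Finset.range m, b i := by
      rw [Finset.sum_add_distrib, Finset.mul_sum]
    have h3 : ∑ i ∈ Finset.range m, b i ≤ B :=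
      Summable.sum_le_tsum (Finset.range m) (fun i _ => hb0 i) hb
    have h4 : ∑ i ∈ Finset.range m, u i ≤ ∑ i ∈ Finset.range (m+1), u i :=
      Finset.sum_le_sum_of_subset_of_nonneg (Finset.range_subset_range.mpr (Nat.le_succ m))
        (fun i _ _ => hu i)
    set S := ∑ i ∈ Finset.range (m+1), u i with hS
    have h5 : S ≤ u 0 + (r * S + B) := by
      have := mul_le_mul_of_nonneg_left h4 hr0
      nlinarith
    rw [le_div_iff₀ hden]
    nlinarith

set_option maxHeartbeats 1000000 in
/-- Lemma 1, case (2b): if for every `M > 0` and every `K` there is `n ≥ K` with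
`|f₁ₙ| > M|f₂ₙ|`, then eventually `f₁ₙ ≠ 0`, the ratio `f₂ₙ/f₁ₙ → 0`, and `f₁ₙ` converges to
a nonzero limit. -/
theorem f1_converges_of_not_comparable
    (f₁ f₂ : ℕ → ℂ) (δ : ℕ → ℝ) (hδ0 : ∀ n, 0 ≤ δ n) (hδ : Summable δ)
    (c : ℕ → ℂ) (climit : ℂ) (hc : Tendsto c atTop (nhds climit))
    (hclim : ‖climit‖ < 1)
    (h1 : ∀ n, ‖f₁ (n + 1) - f₁ n‖ ≤ δ n * (‖f₁ n‖ + ‖f₂ n‖))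
    (h2 : ∀ n, ‖f₂ (n + 1) - c n * f₂ n‖ ≤
      δ n * (‖f₁ n‖ + ‖f₂ n‖))
    (hnc : ∀ M > (0 : ℝ), ∀ K : ℕ, ∃ n ≥ K, ‖f₁ n‖ > M * ‖f₂ n‖) :
    (∀ᶠ n in atTop, f₁ n ≠ 0) ∧
    Tendsto (fun n => f₂ n / f₁ n) atTop (nhds 0) ∧
    ∃ f : ℂ, f ≠ 0 ∧ Tendsto f₁ atTop (nhds f) := by
  -- constants
  set r : ℝ := (1 + ‖climit‖) / 2 with hrdef
  have hcl0 : (0:ℝ) ≤ ‖climit‖ := norm_nonneg _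
  have hrc : ‖climit‖ < r := by rw [hrdef]; linarith
  have hr1 : r < 1 := by rw [hrdef]; linarith
  have hr0 : (0:ℝ) ≤ r := by rw [hrdef]; linarith
  -- choose N so that the tail is tame
  have hcev : ∀ᶠ n in atTop, ‖c n‖ < r := hc.norm.eventually_lt_const hrc
  have hδ0' : Tendsto δ atTop (nhds 0) := hδ.tendsto_atTop_zero
  have hminpos : (0:ℝ) < min ((1 - r)/4) (1/4) := lt_min (by linarith) (by norm_num)
  have hδev : ∀ᶠ n in atTop, δ n < min ((1 - r)/4) (1/4) :=
    hδ0'.eventually_lt_const hminpos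
  obtain ⟨N, hN⟩ := (hcev.and hδev).exists_forall_of_atTop
  -- the starting index
  obtain ⟨n₀, hn₀N, hn₀⟩ := hnc 1 one_pos N
  rw [one_mul] at hn₀
  have hA : (0:ℝ) < ‖f₁ n₀‖ := lt_of_le_of_lt (norm_nonneg _) hn₀
  set A : ℝ := ‖f₁ n₀‖ with hAdef
  set S : ℕ → ℝ := fun k => ∑ i ∈ Finset.range k, δ (n₀ + i) with hSdef
  set T : ℝ := ∑' n, δ n with hTdef
  have hST : ∀ k, S k ≤ T := by
    intro k
    have heq : S k = ∑ i ∈ Finset.Ico n₀ (n₀ + k), δ i := by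
      rw [hSdef, Finset.sum_Ico_eq_sum_range]
      simp
    rw [heq, hTdef]
    exact Summable.sum_le_tsum _ (fun i _ => hδ0 i) hδ
  have hS0 : ∀ k, 0 ≤ S k := fun k => Finset.sum_nonneg (fun i _ => hδ0 _)
  have hSz : S 0 = 0 := by simp [hSdef]
  have hSs : ∀ k, S (k + 1) = S k + δ (n₀ + k) := fun k => Finset.sum_range_succ _ _
  clear_value r A S T
  have hT0 : 0 ≤ T := le_trans (hS0 0) (by simpa using hST 0) |>.trans (le_refl T)
  -- basic step estimates
  have hstep : ∀ n, N ≤ n → ‖f₂ n‖ ≤ ‖f₁ n‖ →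
      ((1 - 2 * δ n) * ‖f₁ n‖ ≤ ‖f₁ (n+1)‖ ∧ ‖f₁ (n+1)‖ ≤ (1 + 2 * δ n) * ‖f₁ n‖) ∧
      ‖f₂ (n+1)‖ ≤ r * ‖f₂ n‖ + 2 * δ n * ‖f₁ n‖ := by
    intro n hn ha
    obtain ⟨hcn, hδn⟩ := hN n hn
    have hδnn : 0 ≤ δ n := hδ0 n
    have e1 := h1 n
    have e2 := h2 n
    have habs : |‖f₁ (n+1)‖ - ‖f₁ n‖| ≤ ‖f₁ (n+1) - f₁ n‖ :=
      abs_norm_sub_norm_le _ _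
    obtain ⟨hl, hu⟩ := abs_le.mp habs
    have hmul : δ n * ‖f₂ n‖ ≤ δ n * ‖f₁ n‖ := mul_le_mul_of_nonneg_left ha hδnn
    constructor
    · constructor
      · nlinarith
      · nlinarith
    · have t1 : ‖f₂ (n+1)‖ ≤ ‖f₂ (n+1) - c n * f₂ n‖ + ‖c n‖ * ‖f₂ n‖ := by
        calc ‖f₂ (n+1)‖ = ‖(f₂ (n+1) - c n * f₂ n) + c n * f₂ n‖ := by ring_nf
          _ ≤ ‖f₂ (n+1) - c n * f₂ n‖ + ‖c n * f₂ n‖ := norm_add_le _ _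
          _ = ‖f₂ (n+1) - c n * f₂ n‖ + ‖c n‖ * ‖f₂ n‖ := by rw [norm_mul]
      have t2 : ‖c n‖ * ‖f₂ n‖ ≤ r * ‖f₂ n‖ :=
        mul_le_mul_of_nonneg_right hcn.le (norm_nonneg _)
      nlinarith
  -- the key invariant
  have key : ∀ k, ‖f₂ (n₀ + k)‖ ≤ ‖f₁ (n₀ + k)‖ ∧
      A * Real.exp (-(4 * S k)) ≤ ‖f₁ (n₀ + k)‖ ∧
      ‖f₁ (n₀ + k)‖ ≤ A * Real.exp (2 * S k) := by
    intro k
    induction k with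
    | zero =>
      refine ⟨(hAdef ▸ hn₀).le, ?_, ?_⟩ <;> simp [hSz, hAdef]
    | succ k ih =>
      obtain ⟨ha, hlow, hup⟩ := ih
      have hnN : N ≤ n₀ + k := le_trans hn₀N (Nat.le_add_right _ _)
      have hδ1 : δ (n₀ + k) ≤ (1 - r)/4 :=
        ((hN (n₀ + k) hnN).2.trans_le (min_le_left _ _)).le
      have hδ2 : δ (n₀ + k) ≤ 1/4 :=
        ((hN (n₀ + k) hnN).2.trans_le (min_le_right _ _)).le
      have hδnn : 0 ≤ δ (n₀ + k) := hδ0 _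
      obtain ⟨⟨hf1l, hf1u⟩, hf2s⟩ := hstep (n₀ + k) hnN ha
      have hsucc : n₀ + (k + 1) = (n₀ + k) + 1 := by omega
      have hSsucc : S (k + 1) = S k + δ (n₀ + k) := hSs k
      rw [hsucc, hSsucc]
      have hexp : Real.exp (-(4 * δ (n₀ + k))) ≤ 1 - 2 * δ (n₀ + k) :=
        exp_neg_le_aux _ hδnn hδ2
      have hexp2 : 1 + 2 * δ (n₀ + k) ≤ Real.exp (2 * δ (n₀ + k)) := by
        have := Real.add_one_le_exp (2 * δ (n₀ + k)); linarith
      have hfnn : (0:ℝ) ≤ ‖f₁ (n₀ + k)‖ := norm_nonneg _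
      refine ⟨?_, ?_, ?_⟩
      · -- f₂ stays dominated
        have : r * ‖f₂ (n₀ + k)‖ ≤ r * ‖f₁ (n₀ + k)‖ :=
          mul_le_mul_of_nonneg_left ha hr0
        nlinarith
      · -- lower bound
        have e1 : A * Real.exp (-(4 * (S k + δ (n₀ + k))))
            = (A * Real.exp (-(4 * S k))) * Real.exp (-(4 * δ (n₀ + k))) := by
          rw [mul_assoc, ← Real.exp_add]; ring_nf
        rw [e1]
        calc (A * Real.exp (-(4 * S k))) * Real.exp (-(4 * δ (n₀ + k)))
            ≤ ‖f₁ (n₀ + k)‖ * (1 - 2 * δ (n₀ + k)) :=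
              mul_le_mul hlow hexp (Real.exp_pos _).le hfnn
          _ = (1 - 2 * δ (n₀ + k)) * ‖f₁ (n₀ + k)‖ := by ring
          _ ≤ ‖f₁ ((n₀ + k) + 1)‖ := hf1l
      · -- upper bound
        have e1 : A * Real.exp (2 * (S k + δ (n₀ + k)))
            = (A * Real.exp (2 * S k)) * Real.exp (2 * δ (n₀ + k)) := by
          rw [mul_assoc, ← Real.exp_add]; ring_nf
        rw [e1]
        calc ‖f₁ ((n₀ + k) + 1)‖ ≤ (1 + 2 * δ (n₀ + k)) * ‖f₁ (n₀ + k)‖ := hf1u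
          _ ≤ Real.exp (2 * δ (n₀ + k)) * (A * Real.exp (2 * S k)) := by
              apply mul_le_mul hexp2 hup hfnn (Real.exp_pos _).le
          _ = (A * Real.exp (2 * S k)) * Real.exp (2 * δ (n₀ + k)) := by ring
  -- uniform bounds
  set m : ℝ := A * Real.exp (-(4 * T)) with hmdef
  set C : ℝ := A * Real.exp (2 * T) with hCdef
  have hm0 : 0 < m := by rw [hmdef]; positivity
  have hC0 : 0 < C := by rw [hCdef]; positivity
  clear_value m C
  have hbounds : ∀ n, n₀ ≤ n → m ≤ ‖f₁ n‖ ∧ ‖f₁ n‖ ≤ C ∧ ‖f₂ n‖ ≤ ‖f₁ n‖ := by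
    intro n hn
    obtain ⟨k, rfl⟩ := Nat.exists_eq_add_of_le hn
    obtain ⟨ha, hlow, hup⟩ := key k
    refine ⟨le_trans ?_ hlow, le_trans hup ?_, ha⟩
    · rw [hmdef]
      apply mul_le_mul_of_nonneg_left _ hA.le
      apply Real.exp_le_exp.mpr
      have := hST k; linarith
    · rw [hCdef]
      apply mul_le_mul_of_nonneg_left _ hA.le
      apply Real.exp_le_exp.mpr
      have := hST k; linarith
  -- eventually nonzero
  have hne : ∀ᶠ n in atTop, f₁ n ≠ 0 := by
    filter_upwards [eventually_ge_atTop n₀] with n hn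
    intro h0
    have := (hbounds n hn).1
    rw [h0, norm_zero] at this
    linarith
  -- f₂ tends to 0
  have hu : Summable (fun k => ‖f₂ (n₀ + k)‖) := by
    apply summable_of_linear_rec _ (fun k => 2 * C * δ (n₀ + k)) r hr0 hr1
      (fun k => norm_nonneg _) (fun k => mul_nonneg (by linarith) (hδ0 _))
    · have : Summable (fun k => δ (n₀ + k)) := by
        have := (summable_nat_add_iff n₀).mpr hδ
        simpa [add_comm] using this
      simpa [mul_assoc] using this.mul_left (2 * C)
    · intro k
      have hnN : N ≤ n₀ + k := le_trans hn₀N (Nat.le_add_right _ _)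
      obtain ⟨hfb, hCb, ha⟩ := hbounds (n₀ + k) (Nat.le_add_right _ _)
      obtain ⟨_, hf2s⟩ := hstep (n₀ + k) hnN ha
      have hδnn : 0 ≤ δ (n₀ + k) := hδ0 _
      show ‖f₂ (n₀ + (k + 1))‖ ≤ r * ‖f₂ (n₀ + k)‖ + 2 * C * δ (n₀ + k)
      have hsucc : n₀ + (k + 1) = (n₀ + k) + 1 := by omega
      rw [hsucc]
      have h6 : 2 * δ (n₀ + k) * ‖f₁ (n₀ + k)‖ ≤ 2 * δ (n₀ + k) * C :=
        mul_le_mul_of_nonneg_left hCb (by linarith)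
      linarith
  have hf2tend : Tendsto (fun n => ‖f₂ n‖) atTop (nhds 0) := by
    have h := hu.tendsto_atTop_zero
    rw [← tendsto_add_atTop_iff_nat n₀]
    simpa [add_comm] using h
  -- ratio tends to 0
  have hratio : Tendsto (fun n => f₂ n / f₁ n) atTop (nhds 0) := by
    rw [tendsto_zero_iff_norm_tendsto_zero]
    apply squeeze_zero' (Eventually.of_forall fun n => norm_nonneg _)
      (g := fun n => ‖f₂ n‖ / m)
    · filter_upwards [eventually_ge_atTop n₀] with n hn
      rw [norm_div]
      exact div_le_div_of_nonneg_left (norm_nonneg _) hm0 (hbounds n hn).1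
    · simpa using hf2tend.div_const m
  -- f₁ converges
  have hdsum : Summable (fun n => dist (f₁ n) (f₁ (n + 1))) := by
    rw [← summable_nat_add_iff n₀]
    refine Summable.of_nonneg_of_le (fun k => dist_nonneg) (fun k => ?_)
      (((summable_nat_add_iff n₀).mpr hδ).mul_left (2 * C))
    · 
      have hn : n₀ ≤ k + n₀ := Nat.le_add_left _ _
      obtain ⟨hfb, hCb, ha⟩ := hbounds (k + n₀) hn
      have e1 := h1 (k + n₀)
      rw [dist_eq_norm, norm_sub_rev]
      have hδnn : 0 ≤ δ (k + n₀) := hδ0 _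
      nlinarith
  obtain ⟨f, hf⟩ := cauchySeq_tendsto_of_complete (cauchySeq_of_summable_dist hdsum)
  have hfm : m ≤ ‖f‖ := by
    apply ge_of_tendsto hf.norm
    filter_upwards [eventually_ge_atTop n₀] with n hn
    exact (hbounds n hn).1
  exact ⟨hne, hratio, f, fun h0 => by rw [h0, norm_zero] at hfm; linarith, hf⟩
end

section
/- Let (r_n) be a sequence of complex numbers, (c_n) complex numbers with c_n → c where |c| < 1, and (e_n) a summable sequence of nonnegative reals, such that |r_{n+1} − c_n r_n| ≤ e_n for all n. Then (r_n) is of bounded variation: Σ_{n=0}^∞ |r_{n+1} − r_n| < ∞ (and in particular r_n converges, with limit 0). -/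
open Filter

/-- Contraction-plus-summable-error lemma: if `|r_{n+1} - cₙ rₙ| ≤ eₙ` with `eₙ ≥ 0` summable
and `cₙ → c`, `|c| < 1`, then `(rₙ)` is of bounded variation (and in particular converges,
with limit `0`). -/
theorem bounded_variation_of_contraction
    (r : ℕ → ℂ) (c : ℕ → ℂ) (climit : ℂ) (hc : Tendsto c atTop (nhds climit))
    (hclim : ‖climit‖ < 1)
    (e : ℕ → ℝ) (he0 : ∀ n, 0 ≤ e n) (he : Summable e)
    (h : ∀ n, ‖r (n + 1) - c n * r n‖ ≤ e n) :
    Summable (fun n => ‖r (n + 1) - r n‖) ∧ Tendsto r atTop (nhds 0) := by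
  set a : ℕ → ℝ := fun n => ‖r n‖ with ha
  have ha0 : ∀ n, 0 ≤ a n := fun n => norm_nonneg _
  set ρ : ℝ := (‖climit‖ + 1) / 2 with hρdef
  have hρ0 : 0 ≤ ρ := by positivity
  have hρ1 : ρ < 1 := by
    simp only [hρdef]; linarith
  have hclimρ : ‖climit‖ < ρ := by
    simp only [hρdef]; linarith
  have habs : Tendsto (fun n => ‖c n‖) atTop (nhds ‖climit‖) :=
    (continuous_norm.tendsto _).comp hc
  obtain ⟨N, hN⟩ := (habs.eventually (gt_mem_nhds hclimρ)).exists_forall_of_atTop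
  -- key recursion
  have key : ∀ n, N ≤ n → a (n + 1) ≤ ρ * a n + e n := by
    intro n hn
    have h1 : a (n + 1) ≤ ‖r (n + 1) - c n * r n‖ + ‖c n * r n‖ := by
      have := norm_add_le (r (n + 1) - c n * r n) (c n * r n)
      simpa using this
    have h2 : ‖c n * r n‖ ≤ ρ * a n := by
      rw [norm_mul]
      exact mul_le_mul_of_nonneg_right (le_of_lt (hN n hn)) (ha0 n)
    calc a (n + 1) ≤ ‖r (n + 1) - c n * r n‖ + ‖c n * r n‖ := h1
      _ ≤ e n + ρ * a n := add_le_add (h n) h2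
      _ = ρ * a n + e n := by ring
  -- summability of shifted a
  have hE : ∀ K, ∑ k ∈ Finset.range K, e (N + k) ≤ ∑' n, e n := by
    intro K
    have := Summable.sum_le_tsum ((Finset.range K).image (fun k => N + k))
      (fun i _ => he0 i) he
    refine le_trans (le_of_eq ?_) this
    rw [Finset.sum_image]
    intro x _ y _ hxy; beta_reduce at hxy; omega
  have hsum_shift : Summable (fun k => a (k + N)) := by
    apply summable_of_sum_range_le (c := (a N + ∑' n, e n) / (1 - ρ)) (fun k => ha0 _)
    intro K
    -- show bound (a N + E)/(1-ρ)
    set S : ℕ → ℝ := fun K => ∑ k ∈ Finset.range K, a (k + N) with hS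
    have hmono : ∀ K, S K ≤ S (K + 1) := by
      intro K
      simp only [hS, Finset.sum_range_succ]
      exact le_add_of_nonneg_right (ha0 _)
    have hrec : ∀ K, S (K + 1) ≤ a N + ρ * S K + ∑' n, e n := by
      intro K
      have : S (K + 1) = a N + ∑ k ∈ Finset.range K, a (k + 1 + N) := by
        simp only [hS]
        rw [Finset.sum_range_succ']
        simp [add_comm]
      rw [this]
      have hstep : ∑ k ∈ Finset.range K, a (k + 1 + N) ≤
          ρ * S K + ∑ k ∈ Finset.range K, e (N + k) := by
        rw [hS, Finset.mul_sum, ← Finset.sum_add_distrib]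
        apply Finset.sum_le_sum
        intro k _
        have := key (k + N) (by omega)
        calc a (k + 1 + N) = a ((k + N) + 1) := by ring_nf
          _ ≤ ρ * a (k + N) + e (k + N) := this
          _ = ρ * a (k + N) + e (N + k) := by rw [add_comm k N]
      linarith [hE K]
    have hbd : ∀ K, (1 - ρ) * S K ≤ a N + ∑' n, e n := by
      intro K
      have h1 : S K ≤ a N + ρ * S K + ∑' n, e n := le_trans (hmono K) (hrec K)
      nlinarith
    have h1ρ : 0 < 1 - ρ := by linarith
    show S K ≤ (a N + ∑' n, e n) / (1 - ρ)
    rw [le_div_iff₀ h1ρ]; nlinarith [hbd K]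
  have hsuma : Summable a := (summable_nat_add_iff N).mp hsum_shift
  -- bounded variation
  have hbv : Summable (fun n => ‖r (n + 1) - r n‖) := by
    rw [← summable_nat_add_iff N]
    have hdom : Summable (fun n => e (n + N) + (ρ + 1) * a (n + N)) :=
      ((summable_nat_add_iff N).mpr he).add
        (((summable_nat_add_iff N).mpr hsuma).mul_left _)
    refine Summable.of_nonneg_of_le (fun n => norm_nonneg _) ?_ hdom
    · intro n
      have hdec : r (n + N + 1) - r (n + N) =
          (r (n + N + 1) - c (n + N) * r (n + N)) + (c (n + N) - 1) * r (n + N) := by ring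
      calc ‖r (n + N + 1) - r (n + N)‖
          ≤ ‖r (n + N + 1) - c (n + N) * r (n + N)‖ +
            ‖(c (n + N) - 1) * r (n + N)‖ := by
            rw [hdec]; exact norm_add_le _ _
        _ ≤ e (n + N) + (ρ + 1) * a (n + N) := by
            apply add_le_add (h (n + N))
            rw [norm_mul]
            apply mul_le_mul_of_nonneg_right _ (ha0 _)
            calc ‖c (n + N) - 1‖ ≤ ‖c (n + N)‖ + 1 := by
                  have := norm_sub_le (c (n + N)) 1
                  simpa using this
              _ ≤ ρ + 1 := by linarith [le_of_lt (hN (n + N) (by omega))]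
  refine ⟨hbv, ?_⟩
  have ha_to0 : Tendsto a atTop (nhds 0) := hsuma.tendsto_atTop_zero
  rw [tendsto_zero_iff_norm_tendsto_zero]
  simpa using ha_to0
end

section
/- For every n ≥ 1 and every ζ on the unit circle, the following identity holds: ζⁿ·ρ_n·conj(φ_{n+1}(ζ))·φ*_n(ζ) − ζ^{n−1}·ρ_{n−1}·conj(φ_n(ζ))·φ*_{n−1}(ζ) = −(ζⁿ·α_n + ζ^{n−1}·α_{n−1})·|φ_n(ζ)|². -/
open Filter Finset

lemma rho_ne_zero {α : ℕ → ℂ} (hα : ∀ n, ‖α n‖ < 1) (k : ℕ) :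
    (((Real.sqrt (1 - ‖α k‖ ^ 2) : ℝ) : ℂ)) ≠ 0 := by
  have h1 : ‖α k‖ ^ 2 < 1 := by
    have := hα k
    nlinarith [norm_nonneg (α k)]
  have : (0:ℝ) < Real.sqrt (1 - ‖α k‖ ^ 2) :=
    Real.sqrt_pos.2 (by linarith)
  exact_mod_cast this.ne'

lemma rho_sq {α : ℕ → ℂ} (hα : ∀ n, ‖α n‖ < 1) (k : ℕ) :
    (((Real.sqrt (1 - ‖α k‖ ^ 2) : ℝ) : ℂ)) ^ 2 =
      1 - α k * (starRingEnd ℂ) (α k) := by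
  have h1 : ‖α k‖ ^ 2 ≤ 1 := by
    have := (hα k).le
    nlinarith [norm_nonneg (α k)]
  have h2 : Real.sqrt (1 - ‖α k‖ ^ 2) ^ 2 = 1 - ‖α k‖ ^ 2 :=
    Real.sq_sqrt (by linarith)
  have h3 : α k * (starRingEnd ℂ) (α k) = ((‖α k‖ ^ 2 : ℝ) : ℂ) := by
    rw [Complex.mul_conj, Complex.sq_norm]
  rw [h3, ← Complex.ofReal_pow, h2, Complex.ofReal_sub, Complex.ofReal_one]

lemma phi_rec {α : ℕ → ℂ} (hα : ∀ n, ‖α n‖ < 1) (ζ : ℂ) (k : ℕ) :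
    (((Real.sqrt (1 - ‖α k‖ ^ 2) : ℝ) : ℂ)) * (szegoPhi α ζ (k + 1)).1 =
      ζ * (szegoPhi α ζ k).1 - (starRingEnd ℂ) (α k) * (szegoPhi α ζ k).2 := by
  have h := rho_ne_zero hα k
  conv_lhs => rw [szegoPhi]
  simp only [Prod.smul_fst, smul_eq_mul]
  field_simp

lemma psi_rec {α : ℕ → ℂ} (hα : ∀ n, ‖α n‖ < 1) (ζ : ℂ) (k : ℕ) :
    (((Real.sqrt (1 - ‖α k‖ ^ 2) : ℝ) : ℂ)) * (szegoPhi α ζ (k + 1)).2 =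
      (szegoPhi α ζ k).2 - α k * ζ * (szegoPhi α ζ k).1 := by
  have h := rho_ne_zero hα k
  conv_lhs => rw [szegoPhi]
  simp only [Prod.smul_snd, smul_eq_mul]
  field_simp

lemma psi_inv_rec {α : ℕ → ℂ} (hα : ∀ n, ‖α n‖ < 1) (ζ : ℂ) (k : ℕ) :
    (((Real.sqrt (1 - ‖α k‖ ^ 2) : ℝ) : ℂ)) * (szegoPhi α ζ k).2 =
      (szegoPhi α ζ (k + 1)).2 + α k * (szegoPhi α ζ (k + 1)).1 := by
  have h := rho_ne_zero hα k
  have h1 := phi_rec hα ζ k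
  have h2 := psi_rec hα ζ k
  have h3 := rho_sq hα k
  apply mul_left_cancel₀ h
  rw [show (((Real.sqrt (1 - ‖α k‖ ^ 2) : ℝ) : ℂ)) *
      ((((Real.sqrt (1 - ‖α k‖ ^ 2) : ℝ) : ℂ)) * (szegoPhi α ζ k).2) =
      (((Real.sqrt (1 - ‖α k‖ ^ 2) : ℝ) : ℂ)) ^ 2 * (szegoPhi α ζ k).2 by ring]
  linear_combination (szegoPhi α ζ k).2 * h3 - h2 - α k * h1

lemma psi_eq_conj {α : ℕ → ℂ} (hα : ∀ n, ‖α n‖ < 1) {ζ : ℂ}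
    (hζ : ‖ζ‖ = 1) (k : ℕ) :
    (szegoPhi α ζ k).2 = ζ ^ k * (starRingEnd ℂ) ((szegoPhi α ζ k).1) := by
  have hz : ζ * (starRingEnd ℂ) ζ = 1 := by
    rw [Complex.mul_conj, ← Complex.sq_norm, hζ]; norm_num
  induction k with
  | zero => simp [szegoPhi]
  | succ k ih =>
    have h := rho_ne_zero hα k
    have h2 := psi_rec hα ζ k
    have h1c := congrArg (starRingEnd ℂ) (phi_rec hα ζ k)
    simp only [map_mul, map_sub, Complex.conj_ofReal, Complex.conj_conj] at h1c
    have ihc := congrArg (starRingEnd ℂ) ih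
    simp only [map_mul, map_pow, Complex.conj_conj] at ihc
    have hzk : ζ ^ k * (starRingEnd ℂ) ζ ^ k = 1 := by
      rw [← mul_pow, hz, one_pow]
    apply mul_left_cancel₀ h
    linear_combination h2 - ζ ^ (k + 1) * h1c + ih + ζ ^ (k + 1) * α k * ihc -
      ζ ^ k * (starRingEnd ℂ) ((szegoPhi α ζ k).1) * hz + α k * ζ * (szegoPhi α ζ k).1 * hzk

/-- The key algebraic identity in the proof of Theorem 3: for `n ≥ 1` (written `n + 1`) and
`ζ` on the unit circle,
`ζⁿ ρₙ conj(φ_{n+1}) φ*ₙ − ζ^{n-1} ρ_{n-1} conj(φₙ) φ*_{n-1} = −(ζⁿ αₙ + ζ^{n-1} α_{n-1}) |φₙ|²`. -/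
theorem rotated_numerator_difference
    (α : ℕ → ℂ) (hα : ∀ n, ‖α n‖ < 1)
    (ζ : ℂ) (hζ : ‖ζ‖ = 1) (n : ℕ) :
    ζ ^ (n + 1) * ((Real.sqrt (1 - ‖α (n + 1)‖ ^ 2) : ℝ) : ℂ) *
        (starRingEnd ℂ) ((szegoPhi α ζ (n + 2)).1) * (szegoPhi α ζ (n + 1)).2 -
      ζ ^ n * ((Real.sqrt (1 - ‖α n‖ ^ 2) : ℝ) : ℂ) *
        (starRingEnd ℂ) ((szegoPhi α ζ (n + 1)).1) * (szegoPhi α ζ n).2 =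
    -(ζ ^ (n + 1) * α (n + 1) + ζ ^ n * α n) *
      ((‖(szegoPhi α ζ (n + 1)).1‖ : ℝ) : ℂ) ^ 2 := by
  have hz : ζ * (starRingEnd ℂ) ζ = 1 := by
    rw [Complex.mul_conj, ← Complex.sq_norm, hζ]; norm_num
  have hzk : ζ ^ (n + 1) * (starRingEnd ℂ) ζ ^ (n + 1) = 1 := by
    rw [← mul_pow, hz, one_pow]
  have h3 := psi_eq_conj hα hζ (n + 1)
  have h3c := congrArg (starRingEnd ℂ) h3
  simp only [map_mul, map_pow, Complex.conj_conj] at h3c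
  -- conj of the Szegő recursion at step n+1, with conj ψ_{n+1} rewritten
  have e1 := congrArg (starRingEnd ℂ) (phi_rec hα ζ (n + 1))
  simp only [map_mul, map_sub, Complex.conj_ofReal, Complex.conj_conj] at e1
  rw [h3c] at e1
  -- inverse recursion at step n, with ψ_{n+1} rewritten
  have e2 := psi_inv_rec hα ζ n
  rw [h3] at e2
  -- |φ|² cast
  have habs : ((‖(szegoPhi α ζ (n + 1)).1‖ : ℝ) : ℂ) ^ 2 =
      (szegoPhi α ζ (n + 1)).1 * (starRingEnd ℂ) ((szegoPhi α ζ (n + 1)).1) := by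
    rw [Complex.mul_conj, ← Complex.sq_norm]
    push_cast
    ring
  rw [habs, h3]
  linear_combination ζ ^ (2 * n + 2) * (starRingEnd ℂ) ((szegoPhi α ζ (n + 1)).1) * e1 -
    ζ ^ n * (starRingEnd ℂ) ((szegoPhi α ζ (n + 1)).1) * e2 +
    ζ ^ (2 * n + 1) * (starRingEnd ℂ) ((szegoPhi α ζ (n + 1)).1) ^ 2 * hz -
    ζ ^ (n + 1) * α (n + 1) * (szegoPhi α ζ (n + 1)).1 *
      (starRingEnd ℂ) ((szegoPhi α ζ (n + 1)).1) * hzk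
end

section
/- Let c ∈ (0,1) and let (a_n)_{n≥1} be a nondecreasing sequence of real numbers with 0 < a_n ≤ 1 and a_n → 1. Define α_{−1} = −1 and recursively α_n = c·a_{n+1}²/(1 − α_{n−1}) − 1 for n ≥ 0. Then: (i) −1 < α_n < 0 for all n ≥ 0; (ii) Σ_{n=0}^∞ |α_{n+1} − α_n| < ∞ (the sequence is of bounded variation); and (iii) α_n → −√(1−c). -/
open Filter

/-- Appendix: the recursion `α₋₁ = -1`, `αₙ = c·a_{n+1}²/(1 - α_{n-1}) - 1` (here `a (n)`
denotes `a_{n+1}`) with `c ∈ (0,1)` and `aₙ ↗ 1`, `0 < aₙ ≤ 1`, produces Verblunsky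
coefficients with `-1 < αₙ < 0`, of bounded variation, converging to `-√(1-c)`. -/
theorem appendix_recursion_bv
    (c : ℝ) (hc : c ∈ Set.Ioo (0 : ℝ) 1)
    (a : ℕ → ℝ) (ha_mono : Monotone a) (ha_pos : ∀ n, 0 < a n) (ha_le : ∀ n, a n ≤ 1)
    (ha_lim : Tendsto a atTop (nhds 1))
    (α : ℕ → ℝ)
    (hα0 : α 0 = c * a 0 ^ 2 / (1 - (-1 : ℝ)) - 1)
    (hαrec : ∀ n, α (n + 1) = c * a (n + 1) ^ 2 / (1 - α n) - 1) :
    (∀ n, -1 < α n ∧ α n < 0) ∧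
    Summable (fun n => |α (n + 1) - α n|) ∧
    Tendsto α atTop (nhds (-Real.sqrt (1 - c))) := by
  obtain ⟨hc0, hc1⟩ := hc
  have hasq : ∀ n, a n ^ 2 ≤ 1 := fun n =>
    (by nlinarith [ha_pos n, ha_le n] : a n ^ 2 ≤ 1)
  have hasq_pos : ∀ n, 0 < a n ^ 2 := fun n => pow_pos (ha_pos n) 2
  -- bounds: -1 < α n ≤ c - 1
  have hb : ∀ n, -1 < α n ∧ α n ≤ c - 1 := by
    intro n
    induction n with
    | zero =>
      rw [hα0]
      norm_num
      constructor
      · have := hasq_pos 0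
        have : 0 < c * a 0 ^ 2 / 2 := by positivity
        linarith
      · have h1 : c * a 0 ^ 2 ≤ c := by nlinarith [hasq 0]
        have : c * a 0 ^ 2 / 2 ≤ c := by linarith
        linarith
    | succ n ih =>
      obtain ⟨ih1, ih2⟩ := ih
      have hden : (1 : ℝ) ≤ 1 - α n := by linarith
      have hdenpos : (0 : ℝ) < 1 - α n := by linarith
      rw [hαrec n]
      constructor
      · have : 0 < c * a (n + 1) ^ 2 / (1 - α n) :=
          div_pos (mul_pos hc0 (hasq_pos (n + 1))) hdenpos
        linarith
      · have h1 : c * a (n + 1) ^ 2 / (1 - α n) ≤ c * a (n + 1) ^ 2 :=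
          div_le_self (by positivity) hden
        have h2 : c * a (n + 1) ^ 2 ≤ c := by nlinarith [hasq (n + 1)]
        linarith
  -- monotonicity
  have hmono : ∀ n, α n ≤ α (n + 1) := by
    intro n
    induction n with
    | zero =>
      have hb0 := hb 0
      have hdenpos : (0 : ℝ) < 1 - α 0 := by linarith [hb0.2, hc1]
      have hden2 : 1 - α 0 ≤ 2 := by linarith [hb0.1]
      have hα0' : α 0 = c * a 0 ^ 2 / 2 - 1 := by rw [hα0]; norm_num
      have h1 : c * a 0 ^ 2 / 2 ≤ c * a 1 ^ 2 / (1 - α 0) := by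
        refine div_le_div₀ (mul_pos hc0 (hasq_pos 1)).le ?_ hdenpos hden2
        exact mul_le_mul_of_nonneg_left
          (pow_le_pow_left₀ (ha_pos 0).le (ha_mono (by norm_num)) 2) hc0.le
      rw [hαrec 0]
      linarith
    | succ n ih =>
      have hbn := hb n
      have hbn1 := hb (n + 1)
      have hd1 : (0 : ℝ) < 1 - α (n + 1) := by linarith [hbn1.2, hc1]
      rw [hαrec n, hαrec (n + 1)]
      have h1 : c * a (n + 1) ^ 2 / (1 - α n) ≤ c * a (n + 2) ^ 2 / (1 - α (n + 1)) := by
        refine div_le_div₀ (mul_pos hc0 (hasq_pos (n + 2))).le ?_ hd1 (by linarith)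
        exact mul_le_mul_of_nonneg_left
          (pow_le_pow_left₀ (ha_pos (n + 1)).le (ha_mono (by norm_num)) 2) hc0.le
      linarith
  have hMono : Monotone α := monotone_nat_of_le_succ hmono
  have hbdd : BddAbove (Set.range α) := ⟨c - 1, by rintro x ⟨n, rfl⟩; exact (hb n).2⟩
  set L := ⨆ n, α n with hLdef
  have hL : Tendsto α atTop (nhds L) := tendsto_atTop_ciSup hMono hbdd
  have hLle : L ≤ c - 1 := ciSup_le fun n => (hb n).2
  have hLne : (1 : ℝ) - L ≠ 0 := by intro h; nlinarith
  -- limit identification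
  have hL1 : Tendsto (fun n => α (n + 1)) atTop (nhds L) :=
    hL.comp (tendsto_add_atTop_nat 1)
  have ha1 : Tendsto (fun n => a (n + 1)) atTop (nhds 1) :=
    ha_lim.comp (tendsto_add_atTop_nat 1)
  have hrhs : Tendsto (fun n => c * a (n + 1) ^ 2 / (1 - α n) - 1) atTop
      (nhds (c * 1 ^ 2 / (1 - L) - 1)) :=
    (((tendsto_const_nhds.mul (ha1.pow 2)).div (tendsto_const_nhds.sub hL) hLne).sub
      tendsto_const_nhds)
  have heq : L = c * 1 ^ 2 / (1 - L) - 1 := by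
    refine tendsto_nhds_unique hL1 ?_
    convert hrhs using 1
    funext n
    exact hαrec n
  have hLsq : L ^ 2 = 1 - c := by
    have h1L : (0:ℝ) < 1 - L := by linarith
    field_simp at heq
    nlinarith
  have hLneg : L < 0 := by nlinarith
  have hLval : -Real.sqrt (1 - c) = L := by
    rw [← hLsq, Real.sqrt_sq_eq_abs, abs_of_neg hLneg]
    ring
  refine ⟨fun n => ⟨(hb n).1, by linarith [(hb n).2]⟩, ?_, hLval ▸ hL⟩
  -- summability
  have habs : ∀ n, |α (n + 1) - α n| = α (n + 1) - α n := fun n =>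
    abs_of_nonneg (by linarith [hmono n])
  apply summable_of_sum_range_le (c := -α 0) (fun n => by rw [habs n]; linarith [hmono n])
  intro n
  have : ∑ i ∈ Finset.range n, |α (i + 1) - α i| = α n - α 0 := by
    rw [Finset.sum_congr rfl fun i _ => habs i, Finset.sum_range_sub]
  rw [this]
  linarith [(hb n).2]
end

section
/- Suppose α_n → L with 0 < |L| < 1, Σ_{n=0}^∞ |α_{n+1} − α_n| < ∞, ζ lies on the unit circle with |ζ − 1| < 2|L| (ζ in the open spectral gap), and Σ_{j=0}^∞ |φ_j(ζ)|² = ∞ (ζ is not a pure point). Then |φ_n(ζ)| → ∞ and |φ*_n(ζ)| → ∞ as n → ∞. -/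
set_option maxHeartbeats 1600000

open Filter Finset

lemma szegoPhi_succ_fst (α : ℕ → ℂ) (ζ : ℂ) (n : ℕ) :
    (szegoPhi α ζ (n+1)).1 = (((Real.sqrt (1 - ‖α n‖ ^ 2) : ℝ) : ℂ))⁻¹ *
      (ζ * (szegoPhi α ζ n).1 - (starRingEnd ℂ) (α n) * (szegoPhi α ζ n).2) := by
  simp [szegoPhi, smul_eq_mul]

lemma szegoPhi_succ_snd (α : ℕ → ℂ) (ζ : ℂ) (n : ℕ) :
    (szegoPhi α ζ (n+1)).2 = (((Real.sqrt (1 - ‖α n‖ ^ 2) : ℝ) : ℂ))⁻¹ *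
      ((szegoPhi α ζ n).2 - α n * ζ * (szegoPhi α ζ n).1) := by
  simp [szegoPhi, smul_eq_mul]

lemma abs_fst_eq_abs_snd (α : ℕ → ℂ) (ζ : ℂ) (hζ : ‖ζ‖ = 1) (n : ℕ) :
    ‖(szegoPhi α ζ n).1‖ = ‖(szegoPhi α ζ n).2‖ := by
  induction n with
  | zero => simp [szegoPhi]
  | succ n ih =>
    set φ := (szegoPhi α ζ n).1
    set ψ := (szegoPhi α ζ n).2
    have hns : Complex.normSq φ = Complex.normSq ψ := by
      rw [← Complex.sq_norm, ← Complex.sq_norm, ih]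
    have hz : Complex.normSq ζ = 1 := by rw [← Complex.sq_norm, hζ]; norm_num
    have hre : ∀ a b : ℂ, (a * (starRingEnd ℂ) b).re = (b * (starRingEnd ℂ) a).re := by
      intro a b
      simp only [Complex.mul_re, Complex.conj_re, Complex.conj_im]
      ring
    have key : ‖ζ * φ - (starRingEnd ℂ) (α n) * ψ‖ =
        ‖ψ - α n * ζ * φ‖ := by
      rw [Complex.norm_def, Complex.norm_def]
      congr 1
      rw [Complex.normSq_sub, Complex.normSq_sub]
      have e1 : ζ * φ * (starRingEnd ℂ) ((starRingEnd ℂ) (α n) * ψ)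
          = (ζ * φ * α n) * (starRingEnd ℂ) ψ := by
        simp only [map_mul, Complex.conj_conj]; ring
      have e2 : ψ * (starRingEnd ℂ) (α n * ζ * φ) = ψ * (starRingEnd ℂ) (ζ * φ * α n) := by
        ring_nf
      rw [e1, hre, e2]
      simp only [Complex.normSq_mul, Complex.normSq_conj, hz, hns]
      ring
    rw [szegoPhi_succ_fst, szegoPhi_succ_snd, norm_mul, norm_mul, key]

lemma eigen_step (ρc l1 l2 ζ Lb L x1 x2 : ℂ) (hρ : ρc ≠ 0)
    (htr : ρc * (l1 + l2) = ζ + 1) (hdet : l1 * l2 = ζ) (hρ2 : ρc^2 = 1 - Lb * L) :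
    (ζ - ρc*l2) * (ρc⁻¹*(ζ*x1 - Lb*x2)) - Lb * (ρc⁻¹*(x2 - L*ζ*x1))
      = l1 * ((ζ - ρc*l2)*x1 - Lb*x2) := by
  have key : (ζ - ρc*l2) * (ζ*x1 - Lb*x2) - Lb * (x2 - L*ζ*x1)
      = ρc * (l1 * ((ζ - ρc*l2)*x1 - Lb*x2)) := by
    linear_combination (Lb*x2 - ζ*x1)*htr + (ρc^2*x1)*hdet + (ζ*x1)*hρ2
  calc (ζ - ρc*l2) * (ρc⁻¹*(ζ*x1 - Lb*x2)) - Lb * (ρc⁻¹*(x2 - L*ζ*x1))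
      = ρc⁻¹ * ((ζ - ρc*l2) * (ζ*x1 - Lb*x2) - Lb * (x2 - L*ζ*x1)) := by ring
    _ = ρc⁻¹ * (ρc * (l1 * ((ζ - ρc*l2)*x1 - Lb*x2))) := by rw [key]
    _ = l1 * ((ζ - ρc*l2)*x1 - Lb*x2) := by field_simp

/-- In the second case of the proof of Theorem 1: if `ζ` in the open spectral gap is not a
pure point, then both `|φ_n(ζ)|` and `|φ*_n(ζ)|` tend to infinity. -/
theorem phi_tendsto_atTop_of_not_pure_point
    (α : ℕ → ℂ) (hα : ∀ n, ‖α n‖ < 1)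
    (L : ℂ) (hL0 : 0 < ‖L‖) (hL1 : ‖L‖ < 1)
    (hlim : Tendsto α atTop (nhds L))
    (hbv : Summable (fun n => ‖α (n + 1) - α n‖))
    (ζ : ℂ) (hζ : ‖ζ‖ = 1) (hgap : ‖ζ - 1‖ < 2 * ‖L‖)
    (hnpp : ¬ Summable (fun j => ‖(szegoPhi α ζ j).1‖ ^ 2)) :
    Tendsto (fun n => ‖(szegoPhi α ζ n).1‖) atTop atTop ∧
    Tendsto (fun n => ‖(szegoPhi α ζ n).2‖) atTop atTop := by
  -- ### Spectral setup
  set r := ‖L‖ with hr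
  set ρ := Real.sqrt (1 - r^2) with hρ
  have hr2pos : 0 < 1 - r^2 := by
    have h0 : (0:ℝ) ≤ r := le_of_lt hL0
    calc (0:ℝ) < (1 - r) * (1 + r) := mul_pos (by linarith) (by linarith)
      _ = 1 - r^2 := by ring
  have hρsq : ρ^2 = 1 - r^2 := Real.sq_sqrt (le_of_lt hr2pos)
  have hρ0 : 0 < ρ := Real.sqrt_pos.2 hr2pos
  set θ := Complex.arg ζ with hθ
  set c := Real.cos (θ/2) with hc
  set sn := Real.sin (θ/2) with hsn
  have hζeq : ζ = Complex.exp (θ * Complex.I) := by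
    conv_lhs => rw [← Complex.norm_mul_exp_arg_mul_I ζ]
    rw [hζ]; simp [hθ]
  set z := Complex.exp (↑(θ/2) * Complex.I) with hzdef
  have hz2 : z^2 = ζ := by
    rw [hzdef, ← Complex.exp_nat_mul, hζeq]
    norm_num
    ring_nf
  have hzre : z = (c:ℂ) + (sn:ℂ) * Complex.I := by
    rw [hzdef, Complex.exp_mul_I, hc, hsn]
    simp [Complex.ofReal_cos, Complex.ofReal_sin]
  have habsz : ‖z‖ = 1 := Complex.norm_exp_ofReal_mul_I _
  have hpyth : sn^2 + c^2 = 1 := Real.sin_sq_add_cos_sq _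
  have hcosθ : ζ.re = Real.cos θ := by
    rw [hζeq, Complex.exp_ofReal_mul_I_re]
  have habs2 : ‖ζ-1‖^2 = 2 - 2 * Real.cos θ := by
    rw [← Complex.normSq_eq_norm_sq, Complex.normSq_sub]
    have : Complex.normSq ζ = 1 := by rw [← Complex.sq_norm, hζ]; norm_num
    simp [this, Complex.normSq_one, hcosθ]
    ring
  have hcos2 : Real.cos θ = 1 - 2 * sn^2 := by
    have h := Real.cos_two_mul (θ/2)
    have h2 : 2*(θ/2) = θ := by ring
    rw [h2, ← hc] at h
    linarith only [h, hpyth]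
  have hsnr : sn^2 < r^2 := by
    have h4 : ‖ζ-1‖^2 < (2*r)^2 :=
      pow_lt_pow_left₀ hgap (norm_nonneg _) two_ne_zero
    rw [habs2, hcos2] at h4
    have h5 : (2*r)^2 = 4*r^2 := by ring
    linarith only [h4, h5]
  set s := Real.sqrt (r^2 - sn^2) with hs
  have hssq : s^2 = r^2 - sn^2 := Real.sq_sqrt (by linarith only [hsnr])
  have hs0 : 0 < s := Real.sqrt_pos.2 (by linarith only [hsnr])
  have hc0 : 0 < c := by
    rw [hc]
    apply Real.cos_pos_of_mem_Ioo
    constructor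
    · have := Complex.neg_pi_lt_arg ζ
      rw [← hθ] at this
      linarith
    · have hne : θ ≠ Real.pi := by
        intro hpi
        have : ζ = -1 := by
          rw [hζeq, hpi]
          simp [Complex.exp_pi_mul_I]
        rw [this] at hgap
        norm_num at hgap
        linarith [hgap, hL1]
      have := Complex.arg_le_pi ζ
      rw [← hθ] at this
      have : θ < Real.pi := lt_of_le_of_ne this hne
      linarith
  have hcρ : ρ < c + s := by
    have hs2pos : 0 < s^2 := pow_pos hs0 2
    have hc2 : c^2 = ρ^2 + s^2 := by linarith only [hssq, hρsq, hpyth]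
    by_contra hcon
    push_neg at hcon
    have hpow : (c+s)^2 ≤ ρ^2 :=
      pow_le_pow_left₀ (by positivity) hcon 2
    have hexp : (c+s)^2 = c^2 + 2*(c*s) + s^2 := by ring
    linarith only [hpow, hexp, hc2, hs2pos, mul_pos hc0 hs0]
  set lp := ((c+s : ℝ) : ℂ) * z / (ρ:ℂ) with hlp
  set lm := ((c-s : ℝ) : ℂ) * z / (ρ:ℂ) with hlm
  have hρC : ((ρ:ℝ):ℂ) ≠ 0 := by
    simp only [ne_eq, Complex.ofReal_eq_zero]
    exact ne_of_gt hρ0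
  have hρ2C : ((ρ:ℝ):ℂ)^2 = 1 - (starRingEnd ℂ) L * L := by
    have h1 : (starRingEnd ℂ) L * L = ((r^2 : ℝ) : ℂ) := by
      rw [mul_comm, Complex.mul_conj]
      norm_cast
      rw [Complex.normSq_eq_norm_sq, ← hr]
    rw [h1]
    exact_mod_cast hρsq
  have hcsC : ((c:ℝ):ℂ)^2 + ((sn:ℝ):ℂ)^2 = 1 := by
    exact_mod_cast (by linarith [hpyth] : c^2 + sn^2 = (1:ℝ))
  have htr : ((ρ:ℝ):ℂ) * (lp + lm) = ζ + 1 := by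
    have h1 : ((ρ:ℝ):ℂ) * (lp + lm) = 2*((c:ℝ):ℂ)*z := by
      rw [hlp, hlm]
      field_simp
      push_cast
      ring
    rw [h1, ← hz2, hzre]
    linear_combination hcsC - ((sn:ℝ):ℂ)^2 * Complex.I_sq
  have hdet : lp * lm = ζ := by
    rw [hlp, hlm, ← hz2]
    have hcs2 : ((c:ℝ):ℂ)^2 - ((s:ℝ):ℂ)^2 = ((ρ:ℝ):ℂ)^2 := by
      have : c^2 - s^2 = ρ^2 := by rw [hssq, hρsq]; linarith [hpyth]
      exact_mod_cast congrArg (Complex.ofReal) this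
    field_simp
    push_cast
    linear_combination z^2 * hcs2
  have habsp : ‖lp‖ = (c+s)/ρ := by
    rw [hlp]
    rw [norm_div, norm_mul, habsz, Complex.norm_real, Real.norm_eq_abs, Complex.norm_real, Real.norm_eq_abs]
    rw [abs_of_pos (by positivity), abs_of_pos hρ0, mul_one]
  set g := (c+s)/ρ with hgdef
  have hg : 1 < g := by
    rw [hgdef, lt_div_iff₀ hρ0]
    linarith
  set hm := ‖lm‖ with hhdef
  have hprod : g * hm = 1 := by
    rw [← habsp, hhdef, ← norm_mul, hdet, hζ]
  have hh1 : hm < 1 := by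
    by_contra hcon
    push_neg at hcon
    have h1 : g ≤ g * hm := le_mul_of_one_le_right (by linarith only [hg]) hcon
    linarith only [h1, hprod, hg]
  have hh0 : 0 ≤ hm := norm_nonneg lm
  set mP := ζ - ((ρ:ℝ):ℂ) * lp with hmP
  set mM := ζ - ((ρ:ℝ):ℂ) * lm with hmM
  have hmm : mM - mP = ((2*s:ℝ):ℂ) * z := by
    rw [hmM, hmP, hlp, hlm]
    field_simp
    push_cast
    ring
  have habsmm : ‖mM - mP‖ = 2*s := by
    rw [hmm, norm_mul, habsz, Complex.norm_real, Real.norm_eq_abs, mul_one, abs_of_pos (by positivity)]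
  have hmmne : mM - mP ≠ 0 := by
    rw [hmm]
    apply mul_ne_zero
    · simp only [ne_eq, Complex.ofReal_eq_zero]
      positivity
    · exact Complex.exp_ne_zero _
  set Lb := (starRingEnd ℂ) L with hLbdef
  have hLb : Lb ≠ 0 := by
    rw [hLbdef]
    simp only [ne_eq, map_eq_zero]
    intro h
    rw [h, norm_zero] at hr
    rw [hr] at hL0
    exact lt_irrefl 0 hL0
  -- ### The linear functionals p and q
  set p : ℕ → ℂ := fun n => mM * (szegoPhi α ζ n).1 - Lb * (szegoPhi α ζ n).2 with hpdef
  set q : ℕ → ℂ := fun n => Lb * (szegoPhi α ζ n).2 - mP * (szegoPhi α ζ n).1 with hqdef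
  set ρn : ℕ → ℝ := fun n => Real.sqrt (1 - ‖α n‖ ^ 2) with hρndef
  have hρn0 : ∀ n, 0 < ρn n := by
    intro n
    apply Real.sqrt_pos.2
    have h1 := hα n
    have h0 := norm_nonneg (α n)
    calc (0:ℝ) < (1 - ‖α n‖) * (1 + ‖α n‖) :=
        mul_pos (by linarith) (by linarith)
      _ = 1 - ‖α n‖^2 := by ring
  set d1 : ℕ → ℝ := fun n => |(ρn n)⁻¹ - ρ⁻¹| with hd1def
  set d2 : ℕ → ℝ := fun n =>
    ‖(((ρn n)⁻¹ : ℝ) : ℂ) * α n - (((ρ⁻¹ : ℝ)) : ℂ) * L‖ with hd2def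
  set e : ℕ → ℝ := fun n => d1 n + d2 n with hedef
  have he0 : ∀ n, 0 ≤ e n := by
    intro n
    have := abs_nonneg ((ρn n)⁻¹ - ρ⁻¹)
    have := norm_nonneg ((((ρn n)⁻¹ : ℝ) : ℂ) * α n - (((ρ⁻¹ : ℝ)) : ℂ) * L)
    simp only [hedef, hd1def, hd2def]
    positivity
  -- sum of component absolute values
  set S : ℕ → ℝ := fun n => ‖(szegoPhi α ζ n).1‖ + ‖(szegoPhi α ζ n).2‖
    with hSdef
  -- ### one-step estimates
  have hstep : ∀ n,
      ‖p (n+1) - lp * p n‖ ≤ (‖mM‖ + ‖Lb‖) * (e n * S n) ∧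
      ‖q (n+1) - lm * q n‖ ≤ (‖mP‖ + ‖Lb‖) * (e n * S n) := by
    intro n
    set x1 := (szegoPhi α ζ n).1
    set x2 := (szegoPhi α ζ n).2
    set E1 := (szegoPhi α ζ (n+1)).1 - ((ρ:ℝ):ℂ)⁻¹ * (ζ*x1 - Lb*x2) with hE1def
    set E2 := (szegoPhi α ζ (n+1)).2 - ((ρ:ℝ):ℂ)⁻¹ * (x2 - L*ζ*x1) with hE2def
    have hy1 : (szegoPhi α ζ (n+1)).1 = (((ρn n:ℝ)):ℂ)⁻¹ * (ζ*x1 - (starRingEnd ℂ) (α n) * x2) :=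
      szegoPhi_succ_fst α ζ n
    have hy2 : (szegoPhi α ζ (n+1)).2 = (((ρn n:ℝ)):ℂ)⁻¹ * (x2 - α n * ζ * x1) :=
      szegoPhi_succ_snd α ζ n
    -- bounds on E1, E2
    have habsconj : ‖(((ρn n)⁻¹:ℝ):ℂ) * (starRingEnd ℂ) (α n) - ((ρ⁻¹:ℝ):ℂ) * Lb‖
        = d2 n := by
      rw [hLbdef, hd2def]
      have : (((ρn n)⁻¹:ℝ):ℂ) * (starRingEnd ℂ) (α n) - ((ρ⁻¹:ℝ):ℂ) * (starRingEnd ℂ) L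
          = (starRingEnd ℂ) ((((ρn n)⁻¹:ℝ):ℂ) * α n - ((ρ⁻¹:ℝ):ℂ) * L) := by
        simp only [map_sub, map_mul, Complex.conj_ofReal]
      rw [this, Complex.norm_conj]
    have habsd1 : ‖(((ρn n)⁻¹:ℝ):ℂ) - ((ρ⁻¹:ℝ):ℂ)‖ = d1 n := by
      rw [hd1def]
      rw [← Complex.ofReal_sub, Complex.norm_real, Real.norm_eq_abs]
    have hE1bound : ‖E1‖ ≤ e n * S n := by
      have hE1eq : E1 = ((((ρn n)⁻¹:ℝ):ℂ) - ((ρ⁻¹:ℝ):ℂ)) * (ζ * x1)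
          - ((((ρn n)⁻¹:ℝ):ℂ) * (starRingEnd ℂ) (α n) - ((ρ⁻¹:ℝ):ℂ) * Lb) * x2 := by
        rw [hE1def, hy1]
        push_cast
        ring
      rw [hE1eq]
      calc ‖_‖ ≤ ‖((((ρn n)⁻¹:ℝ):ℂ) - ((ρ⁻¹:ℝ):ℂ)) * (ζ * x1)‖
            + ‖((((ρn n)⁻¹:ℝ):ℂ) * (starRingEnd ℂ) (α n) - ((ρ⁻¹:ℝ):ℂ) * Lb) * x2‖ :=
          norm_sub_le _ _
        _ = d1 n * ‖x1‖ + d2 n * ‖x2‖ := by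
          rw [norm_mul, norm_mul, norm_mul, habsconj, habsd1, hζ, one_mul]
        _ ≤ e n * S n := by
          have h1 : 0 ≤ d1 n := abs_nonneg _
          have h2 : 0 ≤ d2 n := norm_nonneg _
          have h3 : 0 ≤ ‖x1‖ := norm_nonneg _
          have h4 : 0 ≤ ‖x2‖ := norm_nonneg _
          simp only [hedef, hSdef]
          calc d1 n * ‖x1‖ + d2 n * ‖x2‖
              ≤ d1 n * (‖x1‖ + ‖x2‖)
                + d2 n * (‖x1‖ + ‖x2‖) :=
                add_le_add (mul_le_mul_of_nonneg_left (le_add_of_nonneg_right h4) h1)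
                  (mul_le_mul_of_nonneg_left (le_add_of_nonneg_left h3) h2)
            _ = (d1 n + d2 n) * (‖x1‖ + ‖x2‖) := by ring
    have hE2bound : ‖E2‖ ≤ e n * S n := by
      have hE2eq : E2 = ((((ρn n)⁻¹:ℝ):ℂ) - ((ρ⁻¹:ℝ):ℂ)) * x2
          - ((((ρn n)⁻¹:ℝ):ℂ) * α n - ((ρ⁻¹:ℝ):ℂ) * L) * (ζ * x1) := by
        rw [hE2def, hy2]
        push_cast
        ring
      rw [hE2eq]
      calc ‖_‖ ≤ ‖((((ρn n)⁻¹:ℝ):ℂ) - ((ρ⁻¹:ℝ):ℂ)) * x2‖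
            + ‖((((ρn n)⁻¹:ℝ):ℂ) * α n - ((ρ⁻¹:ℝ):ℂ) * L) * (ζ * x1)‖ :=
          norm_sub_le _ _
        _ = d1 n * ‖x2‖ + d2 n * ‖x1‖ := by
          rw [norm_mul, norm_mul, norm_mul, hζ, one_mul, habsd1]
        _ ≤ e n * S n := by
          have h1 : 0 ≤ d1 n := abs_nonneg _
          have h2 : 0 ≤ d2 n := norm_nonneg _
          have h3 : 0 ≤ ‖x1‖ := norm_nonneg _
          have h4 : 0 ≤ ‖x2‖ := norm_nonneg _
          simp only [hedef, hSdef]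
          calc d1 n * ‖x2‖ + d2 n * ‖x1‖
              ≤ d1 n * (‖x1‖ + ‖x2‖)
                + d2 n * (‖x1‖ + ‖x2‖) :=
                add_le_add (mul_le_mul_of_nonneg_left (le_add_of_nonneg_left h3) h1)
                  (mul_le_mul_of_nonneg_left (le_add_of_nonneg_right h4) h2)
            _ = (d1 n + d2 n) * (‖x1‖ + ‖x2‖) := by ring
    constructor
    · have heig := eigen_step ((ρ:ℝ):ℂ) lp lm ζ Lb L x1 x2 hρC htr hdet hρ2C
      have hPstep : p (n+1) - lp * p n = mM * E1 - Lb * E2 := by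
        simp only [hpdef, hE1def, hE2def, hmM]
        linear_combination heig
      rw [hPstep]
      calc ‖mM * E1 - Lb * E2‖
          ≤ ‖mM * E1‖ + ‖Lb * E2‖ := norm_sub_le _ _
        _ = ‖mM‖ * ‖E1‖ + ‖Lb‖ * ‖E2‖ := by
          rw [norm_mul, norm_mul]
        _ ≤ (‖mM‖ + ‖Lb‖) * (e n * S n) := by
          have h1 := norm_nonneg mM
          have h2 := norm_nonneg Lb
          calc ‖mM‖ * ‖E1‖ + ‖Lb‖ * ‖E2‖
              ≤ ‖mM‖ * (e n * S n) + ‖Lb‖ * (e n * S n) :=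
                add_le_add (mul_le_mul_of_nonneg_left hE1bound h1)
                  (mul_le_mul_of_nonneg_left hE2bound h2)
            _ = (‖mM‖ + ‖Lb‖) * (e n * S n) := by ring
    · have htr' : ((ρ:ℝ):ℂ) * (lm + lp) = ζ + 1 := by rw [add_comm lm lp]; exact htr
      have hdet' : lm * lp = ζ := by rw [mul_comm]; exact hdet
      have heig := eigen_step ((ρ:ℝ):ℂ) lm lp ζ Lb L x1 x2 hρC htr' hdet' hρ2C
      have hQstep : q (n+1) - lm * q n = Lb * E2 - mP * E1 := by
        simp only [hqdef, hE1def, hE2def, hmP]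
        linear_combination -heig
      rw [hQstep]
      calc ‖Lb * E2 - mP * E1‖
          ≤ ‖Lb * E2‖ + ‖mP * E1‖ := norm_sub_le _ _
        _ = ‖Lb‖ * ‖E2‖ + ‖mP‖ * ‖E1‖ := by
          rw [norm_mul, norm_mul]
        _ ≤ (‖mP‖ + ‖Lb‖) * (e n * S n) := by
          have h1 := norm_nonneg mP
          have h2 := norm_nonneg Lb
          calc ‖Lb‖ * ‖E2‖ + ‖mP‖ * ‖E1‖
              ≤ ‖Lb‖ * (e n * S n) + ‖mP‖ * (e n * S n) :=
                add_le_add (mul_le_mul_of_nonneg_left hE2bound h2)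
                  (mul_le_mul_of_nonneg_left hE1bound h1)
            _ = (‖mP‖ + ‖Lb‖) * (e n * S n) := by ring
  -- ### reconstruction
  have hx1rec : ∀ n, (mM - mP) * (szegoPhi α ζ n).1 = p n + q n := by
    intro n
    simp only [hpdef, hqdef]
    ring
  have hx2rec : ∀ n, Lb * (mM - mP) * (szegoPhi α ζ n).2 = mP * p n + mM * q n := by
    intro n
    simp only [hpdef, hqdef]
    ring
  set C1 : ℝ := (2*s)⁻¹ * (1 + (‖mP‖ + ‖mM‖) / ‖Lb‖) with hC1def
  have hLbabs : 0 < ‖Lb‖ := norm_pos_iff.2 hLb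
  have hC1pos : 0 < C1 := by
    rw [hC1def]
    have h1 := norm_nonneg mP
    have h2 := norm_nonneg mM
    positivity
  have hrec : ∀ n, S n ≤ C1 * (‖p n‖ + ‖q n‖) := by
    intro n
    have h1 : 2*s * ‖(szegoPhi α ζ n).1‖
        ≤ ‖p n‖ + ‖q n‖ := by
      calc 2*s * ‖(szegoPhi α ζ n).1‖
          = ‖(mM - mP) * (szegoPhi α ζ n).1‖ := by rw [norm_mul, habsmm]
        _ = ‖p n + q n‖ := by rw [hx1rec]
        _ ≤ ‖p n‖ + ‖q n‖ := norm_add_le _ _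
    have h2 : ‖Lb‖ * (2*s) * ‖(szegoPhi α ζ n).2‖
        ≤ (‖mP‖ + ‖mM‖) * (‖p n‖ + ‖q n‖) := by
      calc ‖Lb‖ * (2*s) * ‖(szegoPhi α ζ n).2‖
          = ‖Lb * (mM - mP) * (szegoPhi α ζ n).2‖ := by
            rw [norm_mul, norm_mul, habsmm]
        _ = ‖mP * p n + mM * q n‖ := by rw [hx2rec]
        _ ≤ ‖mP * p n‖ + ‖mM * q n‖ := norm_add_le _ _
        _ = ‖mP‖ * ‖p n‖ + ‖mM‖ * ‖q n‖ := by
            rw [norm_mul, norm_mul]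
        _ ≤ (‖mP‖ + ‖mM‖) * (‖p n‖ + ‖q n‖) := by
            have a1 := norm_nonneg mP
            have a2 := norm_nonneg mM
            have a3 := norm_nonneg (p n)
            have a4 := norm_nonneg (q n)
            calc ‖mP‖ * ‖p n‖ + ‖mM‖ * ‖q n‖
                ≤ ‖mP‖ * (‖p n‖ + ‖q n‖)
                  + ‖mM‖ * (‖p n‖ + ‖q n‖) :=
                  add_le_add (mul_le_mul_of_nonneg_left (le_add_of_nonneg_right a4) a1)
                    (mul_le_mul_of_nonneg_left (le_add_of_nonneg_left a3) a2)
              _ = (‖mP‖ + ‖mM‖)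
                  * (‖p n‖ + ‖q n‖) := by ring
    have hs' : (0:ℝ) < 2*s := by positivity
    have hx1le : ‖(szegoPhi α ζ n).1‖
        ≤ (2*s)⁻¹ * (‖p n‖ + ‖q n‖) := by
      calc ‖(szegoPhi α ζ n).1‖
          = (2*s)⁻¹ * (2*s * ‖(szegoPhi α ζ n).1‖) :=
            (inv_mul_cancel_left₀ (ne_of_gt hs') _).symm
        _ ≤ (2*s)⁻¹ * (‖p n‖ + ‖q n‖) := by
            apply mul_le_mul_of_nonneg_left h1 (by positivity)
    have hx2le : ‖(szegoPhi α ζ n).2‖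
        ≤ (2*s)⁻¹ * ((‖mP‖ + ‖mM‖) / ‖Lb‖
            * (‖p n‖ + ‖q n‖)) := by
      have hs2 : (0:ℝ) < ‖Lb‖ * (2*s) := by positivity
      calc ‖(szegoPhi α ζ n).2‖
          = (‖Lb‖ * (2*s))⁻¹ * (‖Lb‖ * (2*s) * ‖(szegoPhi α ζ n).2‖)
            := (inv_mul_cancel_left₀ (ne_of_gt hs2) _).symm
        _ ≤ (‖Lb‖ * (2*s))⁻¹
            * ((‖mP‖ + ‖mM‖) * (‖p n‖ + ‖q n‖)) := by
            apply mul_le_mul_of_nonneg_left h2 (by positivity)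
        _ = (2*s)⁻¹ * ((‖mP‖ + ‖mM‖) / ‖Lb‖
            * (‖p n‖ + ‖q n‖)) := by
            rw [mul_inv, div_eq_mul_inv]
            ring
    calc S n = ‖(szegoPhi α ζ n).1‖ + ‖(szegoPhi α ζ n).2‖ := rfl
      _ ≤ (2*s)⁻¹ * (‖p n‖ + ‖q n‖)
          + (2*s)⁻¹ * ((‖mP‖ + ‖mM‖) / ‖Lb‖
            * (‖p n‖ + ‖q n‖)) := add_le_add hx1le hx2le
      _ = C1 * (‖p n‖ + ‖q n‖) := by
          rw [hC1def]
          ring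
  -- combined one-step estimate
  set K : ℝ := (‖mM‖ + ‖mP‖ + 2 * ‖Lb‖) * C1 with hKdef
  have hK0 : 0 ≤ K := by
    rw [hKdef]
    have := norm_nonneg mM
    have := norm_nonneg mP
    have := norm_nonneg Lb
    positivity
  have hstep2 : ∀ n,
      ‖p (n+1) - lp * p n‖ ≤ K * e n * (‖p n‖ + ‖q n‖) ∧
      ‖q (n+1) - lm * q n‖ ≤ K * e n * (‖p n‖ + ‖q n‖) := by
    intro n
    have h := hstep n
    have hr1 := hrec n
    have hεS : e n * S n ≤ e n * (C1 * (‖p n‖ + ‖q n‖)) :=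
      mul_le_mul_of_nonneg_left hr1 (he0 n)
    have a1 := norm_nonneg mM
    have a2 := norm_nonneg mP
    have a3 := norm_nonneg Lb
    have a4 := he0 n
    have a5 : 0 ≤ S n := by
      simp only [hSdef]
      positivity
    have a6 : (0:ℝ) ≤ ‖p n‖ + ‖q n‖ := by positivity
    have key : ∀ B : ℝ, 0 ≤ B → B ≤ ‖mM‖ + ‖mP‖ + 2 * ‖Lb‖ →
        B * (e n * S n) ≤ K * e n * (‖p n‖ + ‖q n‖) := by
      intro B hB0 hBle
      calc B * (e n * S n)
          ≤ B * (e n * (C1 * (‖p n‖ + ‖q n‖))) :=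
            mul_le_mul_of_nonneg_left hεS hB0
        _ = (B * C1) * (e n * (‖p n‖ + ‖q n‖)) := by ring
        _ ≤ ((‖mM‖ + ‖mP‖ + 2 * ‖Lb‖) * C1)
            * (e n * (‖p n‖ + ‖q n‖)) := by
            apply mul_le_mul_of_nonneg_right
              (mul_le_mul_of_nonneg_right hBle (le_of_lt hC1pos))
            positivity
        _ = K * e n * (‖p n‖ + ‖q n‖) := by rw [hKdef]; ring
    constructor
    · exact le_trans h.1 (key _ (by positivity) (by linarith))
    · exact le_trans h.2 (key _ (by positivity) (by linarith))
  -- ### e tends to zero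
  have habs_tendsto : Tendsto (fun n => ‖α n‖) atTop (nhds r) :=
    (continuous_norm.tendsto L).comp hlim
  have hρn_tendsto : Tendsto (fun n => ρn n) atTop (nhds ρ) := by
    rw [hρ]
    exact (Real.continuous_sqrt.tendsto _).comp
      (tendsto_const_nhds.sub (habs_tendsto.pow 2))
  have hρni_tendsto : Tendsto (fun n => (ρn n)⁻¹) atTop (nhds ρ⁻¹) :=
    hρn_tendsto.inv₀ (ne_of_gt hρ0)
  have hd1_tendsto : Tendsto d1 atTop (nhds 0) := by
    have h1 : Tendsto (fun n => (ρn n)⁻¹ - ρ⁻¹) atTop (nhds 0) := by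
      simpa using hρni_tendsto.sub (tendsto_const_nhds (x := ρ⁻¹))
    have := (continuous_abs.tendsto 0).comp h1
    simpa [hd1def, Function.comp_def] using this
  have hd2_tendsto : Tendsto d2 atTop (nhds 0) := by
    have h1 : Tendsto (fun n => ((((ρn n)⁻¹:ℝ):ℂ)) * α n - ((ρ⁻¹:ℝ):ℂ) * L) atTop (nhds 0) := by
      have h2 : Tendsto (fun n => (((ρn n)⁻¹:ℝ):ℂ)) atTop (nhds ((ρ⁻¹:ℝ):ℂ)) :=
        (Complex.continuous_ofReal.tendsto _).comp hρni_tendsto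
      simpa using (h2.mul hlim).sub (tendsto_const_nhds (x := ((ρ⁻¹:ℝ):ℂ) * L))
    have := (continuous_norm.tendsto 0).comp h1
    simpa [hd2def, Function.comp_def] using this
  have he_tendsto : Tendsto e atTop (nhds 0) := by
    have := hd1_tendsto.add hd2_tendsto
    simpa [hedef] using this
  -- ### dichotomy constants
  set ε : ℝ := min (min ((g-1)/4) ((1-hm)/4)) ((g-hm)/8) with hεdef
  have hε0 : 0 < ε := by
    rw [hεdef]
    apply lt_min (lt_min (by linarith) (by linarith)) (by linarith)
  set G : ℝ := g - 2*ε with hGdef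
  set H : ℝ := hm + 2*ε with hHdef
  have hεa : ε ≤ (g-1)/4 := le_trans (min_le_left _ _) (min_le_left _ _)
  have hεb : ε ≤ (1-hm)/4 := le_trans (min_le_left _ _) (min_le_right _ _)
  have hεc : ε ≤ (g-hm)/8 := min_le_right _ _
  have hG1 : 1 < G := by rw [hGdef]; linarith
  have hH1 : H < 1 := by rw [hHdef]; linarith
  have hHG : H ≤ G := by rw [hHdef, hGdef]; linarith
  have hH0 : 0 ≤ H := by rw [hHdef]; linarith
  have hG0 : 0 < G := by linarith
  -- ### find N with K * e n ≤ ε for n ≥ N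
  have hKe_tendsto : Tendsto (fun n => K * e n) atTop (nhds 0) := by
    simpa using he_tendsto.const_mul K
  obtain ⟨N, hN⟩ : ∃ N, ∀ n ≥ N, K * e n ≤ ε := by
    have := hKe_tendsto.eventually_le_const hε0
    exact eventually_atTop.1 this
  -- absolute value step bounds for n ≥ N
  have habsp_step : ∀ n ≥ N, ‖q n‖ ≤ ‖p n‖ →
      G * ‖p n‖ ≤ ‖p (n+1)‖ ∧
      ‖q (n+1)‖ ≤ H * ‖p n‖ := by
    intro n hn hqp
    have h := hstep2 n
    have hKe := hN n hn
    have hKe0 : 0 ≤ K * e n := mul_nonneg hK0 (he0 n)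
    have a3 : 0 ≤ ‖p n‖ := norm_nonneg _
    have a4 : 0 ≤ ‖q n‖ := norm_nonneg _
    have hsum : ‖p n‖ + ‖q n‖ ≤ 2 * ‖p n‖ := by linarith
    have hup : K * e n * (‖p n‖ + ‖q n‖) ≤ 2 * ε * ‖p n‖ := by
      calc K * e n * (‖p n‖ + ‖q n‖)
          ≤ K * e n * (2 * ‖p n‖) := mul_le_mul_of_nonneg_left hsum hKe0
        _ = 2 * (K * e n * ‖p n‖) := by ring
        _ ≤ 2 * (ε * ‖p n‖) := by
            have := mul_le_mul_of_nonneg_right hKe a3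
            linarith
        _ = 2 * ε * ‖p n‖ := by ring
    constructor
    · have h1 : ‖lp * p n‖ - ‖p (n+1)‖
          ≤ ‖p (n+1) - lp * p n‖ := by
        have h0 := le_trans (le_abs_self _)
          (abs_norm_sub_norm_le (lp * p n) (p (n+1)))
        rwa [norm_sub_rev (lp * p n) (p (n+1))] at h0
      have h2 : ‖lp * p n‖ = g * ‖p n‖ := by
        rw [norm_mul, habsp]
      have h3 := h.1
      rw [hGdef]
      have h5 : ‖p (n+1) - lp * p n‖ ≤ 2 * ε * ‖p n‖ :=
        le_trans h3 hup
      linarith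
    · have h1 : ‖q (n+1)‖ - ‖lm * q n‖
          ≤ ‖q (n+1) - lm * q n‖ :=
        le_trans (le_abs_self _) (abs_norm_sub_norm_le (q (n+1)) (lm * q n))
      have h2 : ‖lm * q n‖ = hm * ‖q n‖ := by
        rw [norm_mul, hhdef]
      have h3 := h.2
      have h4 : hm * ‖q n‖ ≤ hm * ‖p n‖ :=
        mul_le_mul_of_nonneg_left hqp hh0
      rw [hHdef]
      have h5 : ‖q (n+1) - lm * q n‖ ≤ 2 * ε * ‖p n‖ :=
        le_trans h3 hup
      linarith
  have habsq_step : ∀ n ≥ N, ‖p n‖ ≤ ‖q n‖ →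
      ‖q (n+1)‖ ≤ H * ‖q n‖ := by
    intro n hn hpq
    have h := hstep2 n
    have hKe := hN n hn
    have hKe0 : 0 ≤ K * e n := mul_nonneg hK0 (he0 n)
    have a3 : 0 ≤ ‖p n‖ := norm_nonneg _
    have a4 : 0 ≤ ‖q n‖ := norm_nonneg _
    have hsum : ‖p n‖ + ‖q n‖ ≤ 2 * ‖q n‖ := by linarith
    have hup : K * e n * (‖p n‖ + ‖q n‖) ≤ 2 * ε * ‖q n‖ := by
      calc K * e n * (‖p n‖ + ‖q n‖)
          ≤ K * e n * (2 * ‖q n‖) := mul_le_mul_of_nonneg_left hsum hKe0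
        _ = 2 * (K * e n * ‖q n‖) := by ring
        _ ≤ 2 * (ε * ‖q n‖) := by
            have := mul_le_mul_of_nonneg_right hKe a4
            linarith
        _ = 2 * ε * ‖q n‖ := by ring
    have h1 : ‖q (n+1)‖ - ‖lm * q n‖
        ≤ ‖q (n+1) - lm * q n‖ :=
      le_trans (le_abs_self _) (abs_norm_sub_norm_le (q (n+1)) (lm * q n))
    have h2 : ‖lm * q n‖ = hm * ‖q n‖ := by
      rw [norm_mul, hhdef]
    have h3 := h.2
    rw [hHdef]
    have h5 : ‖q (n+1) - lm * q n‖ ≤ 2 * ε * ‖q n‖ :=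
      le_trans h3 hup
    linarith
  -- lower bound for |φ| by |p|
  set CP : ℝ := ‖mM‖ + ‖Lb‖ with hCPdef
  have hCP0 : 0 < CP := by
    rw [hCPdef]
    have := norm_nonneg mM
    linarith
  have hplow : ∀ n, ‖p n‖ ≤ CP * ‖(szegoPhi α ζ n).1‖ := by
    intro n
    have heq := abs_fst_eq_abs_snd α ζ hζ n
    calc ‖p n‖
        ≤ ‖mM * (szegoPhi α ζ n).1‖ + ‖Lb * (szegoPhi α ζ n).2‖ :=
          norm_sub_le _ _
      _ = ‖mM‖ * ‖(szegoPhi α ζ n).1‖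
          + ‖Lb‖ * ‖(szegoPhi α ζ n).2‖ := by rw [norm_mul, norm_mul]
      _ = CP * ‖(szegoPhi α ζ n).1‖ := by
          rw [← heq, hCPdef]
          ring
  -- upper bound for |φ| by S
  have hphiS : ∀ n, 2 * ‖(szegoPhi α ζ n).1‖ = S n := by
    intro n
    have heq := abs_fst_eq_abs_snd α ζ hζ n
    rw [hSdef]
    simp only
    rw [← heq]
    ring
  -- ### the dichotomy
  by_cases hcase : ∃ n0, N ≤ n0 ∧ ‖q n0‖ ≤ ‖p n0‖
  · -- growth case
    obtain ⟨n0, hn0N, hqp0⟩ := hcase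
    by_cases hp0 : p n0 = 0
    · -- degenerate: the whole vector vanishes from n0 on; contradiction with hnpp
      exfalso
      have hq0 : q n0 = 0 := by
        have := hqp0
        rw [hp0] at this
        simp only [norm_zero] at this
        exact norm_eq_zero.1 (le_antisymm this (norm_nonneg _))
      have hx10 : (szegoPhi α ζ n0).1 = 0 := by
        have h1 := hx1rec n0
        rw [hp0, hq0, add_zero] at h1
        exact (mul_eq_zero.1 h1).resolve_left hmmne
      have hx20 : (szegoPhi α ζ n0).2 = 0 := by
        have h1 := hx2rec n0
        rw [hp0, hq0] at h1
        simp only [mul_zero, add_zero] at h1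
        rcases mul_eq_zero.1 h1 with h | h
        · exact absurd (mul_eq_zero.1 h) (by push_neg; exact ⟨hLb, hmmne⟩)
        · exact h
      have hzero : ∀ m, szegoPhi α ζ (n0 + m) = 0 := by
        intro m
        induction m with
        | zero => rw [add_zero]; exact Prod.ext hx10 hx20
        | succ m ih =>
          have h1 : n0 + (m+1) = (n0 + m) + 1 := by ring
          rw [h1]
          have hf := szegoPhi_succ_fst α ζ (n0 + m)
          have hs2 := szegoPhi_succ_snd α ζ (n0 + m)
          rw [ih] at hf hs2
          simp only [Prod.fst_zero, Prod.snd_zero, mul_zero, zero_sub, sub_zero,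
            zero_mul, neg_zero] at hf hs2
          apply Prod.ext
          · simpa using hf
          · simpa using hs2
      apply hnpp
      rw [← summable_nat_add_iff (f := fun j => ‖(szegoPhi α ζ j).1‖ ^ 2) n0]
      have hzz : ∀ m, ‖(szegoPhi α ζ (m + n0)).1‖ ^ 2 = 0 := by
        intro m
        rw [add_comm m n0, hzero m]
        simp
      exact (summable_congr (fun m => (hzz m))).2 summable_zero
    · have hppos : 0 < ‖p n0‖ := norm_pos_iff.2 hp0
      have ind : ∀ m, ‖q (n0+m)‖ ≤ ‖p (n0+m)‖ ∧
          G^m * ‖p n0‖ ≤ ‖p (n0+m)‖ := by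
        intro m
        induction m with
        | zero => exact ⟨hqp0, by simp⟩
        | succ m ih =>
          have hk : N ≤ n0 + m := le_trans hn0N (Nat.le_add_right _ _)
          have hstepm := habsp_step (n0+m) hk ih.1
          have h1 : n0 + (m+1) = (n0 + m) + 1 := by ring
          rw [h1]
          constructor
          · calc ‖q ((n0+m)+1)‖ ≤ H * ‖p (n0+m)‖ := hstepm.2
              _ ≤ G * ‖p (n0+m)‖ :=
                mul_le_mul_of_nonneg_right hHG (norm_nonneg _)
              _ ≤ ‖p ((n0+m)+1)‖ := hstepm.1
          · calc G^(m+1) * ‖p n0‖ = G * (G^m * ‖p n0‖) := by ring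
              _ ≤ G * ‖p (n0+m)‖ :=
                mul_le_mul_of_nonneg_left ih.2 (le_of_lt hG0)
              _ ≤ ‖p ((n0+m)+1)‖ := hstepm.1
      -- |p| tends to infinity along the shifted sequence, hence so does |φ_n|
      have hgrow : Tendsto (fun m => ‖p (n0+m)‖) atTop atTop := by
        apply tendsto_atTop_mono (fun m => (ind m).2)
        exact (tendsto_pow_atTop_atTop_of_one_lt hG1).atTop_mul_const hppos
      have hphi_grow : Tendsto (fun m => ‖(szegoPhi α ζ (n0+m)).1‖) atTop atTop := by
        apply tendsto_atTop_mono (f := fun m => ‖p (n0+m)‖ / CP)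
        · intro m
          rw [div_le_iff₀ hCP0]
          calc ‖p (n0+m)‖ ≤ CP * ‖(szegoPhi α ζ (n0+m)).1‖ :=
              hplow (n0+m)
            _ = ‖(szegoPhi α ζ (n0+m)).1‖ * CP := by ring
        · exact hgrow.atTop_div_const hCP0
      have hfst : Tendsto (fun n => ‖(szegoPhi α ζ n).1‖) atTop atTop := by
        rw [← tendsto_add_atTop_iff_nat n0]
        have hcomm : (fun m => ‖(szegoPhi α ζ (m + n0)).1‖)
            = (fun m => ‖(szegoPhi α ζ (n0 + m)).1‖) := by
          funext m
          rw [add_comm]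
        rw [hcomm]
        exact hphi_grow
      refine ⟨hfst, ?_⟩
      have hcong : (fun n => ‖(szegoPhi α ζ n).2‖)
          = (fun n => ‖(szegoPhi α ζ n).1‖) := by
        funext n
        rw [abs_fst_eq_abs_snd α ζ hζ n]
      rw [hcong]
      exact hfst
  · -- decay case: contradiction with hnpp
    exfalso
    push_neg at hcase
    have hdecay : ∀ m, ‖q (N+m)‖ ≤ H^m * ‖q N‖ := by
      intro m
      induction m with
      | zero => simp
      | succ m ih =>
        have hk : N ≤ N + m := Nat.le_add_right _ _
        have hpq : ‖p (N+m)‖ ≤ ‖q (N+m)‖ :=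
          le_of_lt (hcase (N+m) hk)
        have hstepm := habsq_step (N+m) hk hpq
        have h1 : N + (m+1) = (N + m) + 1 := by ring
        rw [h1]
        calc ‖q ((N+m)+1)‖ ≤ H * ‖q (N+m)‖ := hstepm
          _ ≤ H * (H^m * ‖q N‖) := mul_le_mul_of_nonneg_left ih hH0
          _ = H^(m+1) * ‖q N‖ := by ring
    have hsummand : Summable (fun m => (C1 * ‖q N‖)^2 * (H^2)^m) := by
      apply Summable.mul_left
      apply summable_geometric_of_lt_one (by positivity)
      have hH0' : 0 < H := by rw [hHdef]; linarith only [hh0, hε0]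
      calc H^2 = H*H := sq H
        _ < H*1 := mul_lt_mul_of_pos_left hH1 hH0'
        _ = H := mul_one H
        _ < 1 := hH1
    have hsum : Summable (fun m => ‖(szegoPhi α ζ (m + N)).1‖ ^ 2) := by
      apply Summable.of_nonneg_of_le (fun m => sq_nonneg _) _ hsummand
      intro m
      have hk : N ≤ N + m := Nat.le_add_right _ _
      have hpq : ‖p (N+m)‖ ≤ ‖q (N+m)‖ :=
        le_of_lt (hcase (N+m) hk)
      have hphile : ‖(szegoPhi α ζ (m+N)).1‖ ≤ C1 * ‖q (N+m)‖ := by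
        rw [add_comm m N]
        have h1 : 2 * ‖(szegoPhi α ζ (N+m)).1‖ = S (N+m) := hphiS (N+m)
        have h2 := hrec (N+m)
        have h3 : ‖p (N+m)‖ + ‖q (N+m)‖
            ≤ 2 * ‖q (N+m)‖ := by
          have := norm_nonneg (p (N+m))
          linarith
        have h4 := mul_le_mul_of_nonneg_left h3 (le_of_lt hC1pos)
        linarith
      have hqle : ‖q (N+m)‖ ≤ H^m * ‖q N‖ := hdecay m
      have hphile2 : ‖(szegoPhi α ζ (m+N)).1‖
          ≤ C1 * ‖q N‖ * H^m := by
        calc ‖(szegoPhi α ζ (m+N)).1‖ ≤ C1 * ‖q (N+m)‖ := hphile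
          _ ≤ C1 * (H^m * ‖q N‖) :=
            mul_le_mul_of_nonneg_left hqle (le_of_lt hC1pos)
          _ = C1 * ‖q N‖ * H^m := by ring
      calc ‖(szegoPhi α ζ (m+N)).1‖^2
          ≤ (C1 * ‖q N‖ * H^m)^2 := by
            apply pow_le_pow_left₀ (norm_nonneg _) hphile2
        _ = (C1 * ‖q N‖)^2 * (H^2)^m := by
            rw [mul_pow, ← pow_mul, ← pow_mul, Nat.mul_comm m 2]
    exact hnpp ((summable_nat_add_iff N).1 hsum)
end
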